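/- arXiv:2312.12448 — 8 statements merged into one kernel-verified Lean document; each statement's English description precedes it below -/
import Mathlib

section
/- Let n ≥ 2. The image of the unitary group U(n) under the diagonal product map Πd (where Πd(A) := ∏_{j=1}^n A_{jj}) is exactly the closed unit disk in ℂ: for every U ∈ U(n) one has |Πd(U)| ≤ 1, and conversely for every complex number z with |z| ≤ 1 there exists U ∈ U(n) with Πd(U) = z. -/
open Matrix Complex

-- 2x2 unitary with diagonal product z
lemma two_by_two (z : ℂ) (hz : ‖z‖ ≤ 1) :
    ∃ M : Matrix (Fin 2) (Fin 2) ℂ, M ∈ Matrix.unitaryGroup (Fin 2) ℂ ∧ M 0 0 * M 1 1 = z := by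
  set r : ℝ := ‖z‖ with hr
  have hr0 : 0 ≤ r := norm_nonneg z
  have hr1 : r ≤ 1 := hz
  set s : ℝ := Real.sqrt r
  set t : ℝ := Real.sqrt (1 - r)
  set u : ℂ := if z = 0 then 1 else z / r with hu_def
  have hu : u * star u = 1 := by
    by_cases h : z = 0
    · simp [hu_def, h]
    · have hrne : (r : ℂ) ≠ 0 := by
        simp only [ne_eq, ofReal_eq_zero]
        exact fun hh => h (norm_eq_zero.mp (by rw [← hr, hh]))
      simp only [hu_def, if_neg h, RingHom.id_apply, star_div₀, star_one]
      rw [div_mul_div_comm]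
      rw [show star (z : ℂ) = (starRingEnd ℂ) z from rfl, Complex.mul_conj]
      have : star ((r : ℂ)) = (r : ℂ) := by simp
      rw [this, ← ofReal_mul]
      rw [div_eq_one_iff_eq (by simpa using mul_ne_zero hrne hrne)]
      norm_cast
      rw [Complex.normSq_eq_norm_sq, ← hr]; ring
  have hs2 : (s : ℂ) * s = (r : ℂ) := by
    norm_cast; exact Real.mul_self_sqrt hr0
  have ht2 : (t : ℂ) * t = 1 - (r : ℂ) := by
    norm_cast
    exact Real.mul_self_sqrt (by linarith)
  have hru : (r : ℂ) * u = z := by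
    by_cases h : z = 0
    · simp [h, hu_def, hr]
    · have hrne : (r : ℂ) ≠ 0 := by
        simp only [ne_eq, ofReal_eq_zero]
        exact fun hh => h (norm_eq_zero.mp (by rw [← hr, hh]))
      rw [hu_def, if_neg h]
      field_simp
  refine ⟨!![s * u, t; -t * u, s], ?_, ?_⟩
  · rw [Matrix.mem_unitaryGroup_iff]
    show _ * (_)ᴴ = _
    have hct : (!![(s:ℂ) * u, t; -t * u, s])ᴴ = !![star ((s:ℂ) * u), star (-(t:ℂ) * u); star ((t:ℂ)), star ((s:ℂ))] := by
      ext i j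
      fin_cases i <;> fin_cases j <;> simp [Matrix.conjTranspose_apply]
    rw [hct, Matrix.mul_fin_two]
    have hs : star ((s : ℂ)) = (s : ℂ) := by simp
    have ht : star ((t : ℂ)) = (t : ℂ) := by simp
    have e1 : (s:ℂ) * u * star ((s:ℂ) * u) + (t:ℂ) * star ((t:ℂ)) = 1 := by
      rw [star_mul', hs, ht]
      calc (s:ℂ) * u * ((s:ℂ) * star u) + (t:ℂ) * t
          = (s:ℂ) * s * (u * star u) + (t:ℂ) * t := by ring
        _ = 1 := by rw [hu, hs2, ht2]; ring
    have hntu : star (-(t:ℂ) * u) = -(t:ℂ) * star u := by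
      rw [star_mul']; simp [mul_comm]
    have e2 : (s:ℂ) * u * star (-(t:ℂ) * u) + (t:ℂ) * star ((s:ℂ)) = 0 := by
      rw [hntu, hs]
      calc (s:ℂ) * u * (-(t:ℂ) * star u) + (t:ℂ) * s
          = -((s:ℂ) * t) * (u * star u) + (t:ℂ) * s := by ring
        _ = 0 := by rw [hu]; ring
    have e3 : -(t:ℂ) * u * star ((s:ℂ) * u) + (s:ℂ) * star ((t:ℂ)) = 0 := by
      rw [star_mul', hs, ht]
      calc -(t:ℂ) * u * ((s:ℂ) * star u) + (s:ℂ) * t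
          = -((t:ℂ) * s) * (u * star u) + (s:ℂ) * t := by ring
        _ = 0 := by rw [hu]; ring
    have e4 : -(t:ℂ) * u * star (-(t:ℂ) * u) + (s:ℂ) * star ((s:ℂ)) = 1 := by
      rw [hntu, hs]
      calc -(t:ℂ) * u * (-(t:ℂ) * star u) + (s:ℂ) * s
          = (t:ℂ) * t * (u * star u) + (s:ℂ) * s := by ring
        _ = 1 := by rw [hu, hs2, ht2]; ring
    rw [e1, e2, e3, e4]
    ext i j; fin_cases i <;> fin_cases j <;> simp
  · show (s:ℂ) * u * s = z
    calc (s:ℂ) * u * s = (s:ℂ) * s * u := by ring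
      _ = z := by rw [hs2, hru]

/-- For `n ≥ 2`, the image of the unitary group `U(n)` under the diagonal product
map `Πd(A) = ∏ⱼ Aⱼⱼ` is exactly the closed unit disk in `ℂ`. -/
theorem diagonalProduct_unitaryGroup_image (n : ℕ) (hn : 2 ≤ n) :
    (∀ U : Matrix (Fin n) (Fin n) ℂ, U ∈ Matrix.unitaryGroup (Fin n) ℂ →
      ‖∏ j, U j j‖ ≤ 1) ∧
    (∀ z : ℂ, ‖z‖ ≤ 1 →
      ∃ U ∈ Matrix.unitaryGroup (Fin n) ℂ, (∏ j, U j j) = z) := by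
  constructor
  · intro U hU
    have hrow : ∀ j : Fin n, ∑ k, Complex.normSq (U j k) = 1 := by
      intro j
      have h1 : (U * Uᴴ) j j = 1 := by
        rw [Matrix.mem_unitaryGroup_iff] at hU
        rw [show Uᴴ = star U from rfl, hU, Matrix.one_apply_eq]
      rw [Matrix.mul_apply] at h1
      have : ∑ k, U j k * Uᴴ k j = ∑ k, (Complex.normSq (U j k) : ℂ) := by
        refine Finset.sum_congr rfl fun k _ => ?_
        rw [Matrix.conjTranspose_apply]
        exact Complex.mul_conj _
      rw [this] at h1
      exact_mod_cast h1
    have hd : ∀ j : Fin n, ‖U j j‖ ≤ 1 := by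
      intro j
      have h2 : Complex.normSq (U j j) ≤ 1 := by
        have := hrow j
        have hle : Complex.normSq (U j j) ≤ ∑ k, Complex.normSq (U j k) :=
          Finset.single_le_sum (fun k _ => Complex.normSq_nonneg _) (Finset.mem_univ j)
        linarith
      rw [← Complex.sq_norm] at h2
      nlinarith [norm_nonneg (U j j)]
    rw [norm_prod]
    exact Finset.prod_le_one (fun j _ => norm_nonneg _) (fun j _ => hd j)
  · intro z hz
    obtain ⟨M, hM, hMz⟩ := two_by_two z hz
    rw [Matrix.mem_unitaryGroup_iff] at hM
    let e : Fin 2 ⊕ Fin (n - 2) ≃ Fin n := finSumFinEquiv.trans (finCongr (by omega))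
    set N : Matrix (Fin 2 ⊕ Fin (n - 2)) (Fin 2 ⊕ Fin (n - 2)) ℂ :=
      Matrix.fromBlocks M 0 0 (1 : Matrix (Fin (n - 2)) (Fin (n - 2)) ℂ) with hNdef
    have hN : N * star N = 1 := by
      rw [hNdef]
      rw [show star (Matrix.fromBlocks M 0 0 (1 : Matrix (Fin (n - 2)) (Fin (n - 2)) ℂ)) =
        (Matrix.fromBlocks M 0 0 1)ᴴ from rfl, Matrix.fromBlocks_conjTranspose,
        Matrix.fromBlocks_multiply]
      simp only [Matrix.conjTranspose_zero, Matrix.conjTranspose_one, Matrix.mul_zero,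
        Matrix.zero_mul, Matrix.mul_one, Matrix.one_mul, add_zero, zero_add]
      rw [show M * Mᴴ = M * star M from rfl, hM, Matrix.fromBlocks_one]
    refine ⟨(Matrix.reindex e e) N, ?_, ?_⟩
    · rw [Matrix.mem_unitaryGroup_iff, Matrix.reindex_apply]
      rw [show star (N.submatrix ⇑e.symm ⇑e.symm) = (N.submatrix ⇑e.symm ⇑e.symm)ᴴ from rfl,
        Matrix.conjTranspose_submatrix, Matrix.submatrix_mul_equiv,
        show Nᴴ = star N from rfl, hN, Matrix.submatrix_one_equiv]
    · have h1 : ∏ j : Fin n, (Matrix.reindex e e N) j j = ∏ i : Fin 2 ⊕ Fin (n - 2), N i i := by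
        rw [Matrix.reindex_apply]
        calc ∏ j : Fin n, N.submatrix ⇑e.symm ⇑e.symm j j
            = ∏ i : Fin 2 ⊕ Fin (n - 2), N.submatrix ⇑e.symm ⇑e.symm (e i) (e i) :=
              (Equiv.prod_comp e _).symm
          _ = ∏ i : Fin 2 ⊕ Fin (n - 2), N i i := by
              simp [Matrix.submatrix_apply]
      rw [h1, Fintype.prod_sum_type]
      have h2 : ∀ i : Fin 2, N (Sum.inl i) (Sum.inl i) = M i i := fun i => rfl
      have h3 : ∀ i : Fin (n - 2), N (Sum.inr i) (Sum.inr i) = 1 := fun i => by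
        rw [hNdef]; exact Matrix.one_apply_eq i
      simp only [h2, h3, Finset.prod_const_one, mul_one, Fin.prod_univ_two]
      exact hMz
end

section
/- Let n ≥ 1, let α, α₁, …, αₙ be real numbers with e^{i(α₁+⋯+αₙ)} = e^{iα}, and let v ∈ ℂⁿ satisfy |v_k| = 1/√n for all k. Then the matrix U = (I − (1 − e^{−iα}) v v†) · diag(e^{iα₁}, …, e^{iαₙ}) belongs to SU(n) and its diagonal product equals Πd(U) = e^{iα} (1 − (1 − e^{−iα})/n)^n. -/
open Matrix Complex

/-- If `e^{i(α₁+⋯+αₙ)} = e^{iα}` and `v ∈ ℂⁿ` has all entries of modulus `1/√n`, then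
`U = (I − (1 − e^{−iα}) v v†) · diag(e^{iα₁}, …, e^{iαₙ})` belongs to `SU(n)` and its
diagonal product equals `e^{iα} (1 − (1 − e^{−iα})/n)ⁿ`. -/
theorem mem_specialUnitaryGroup_and_diagonalProduct_of_boundary_form
    (n : ℕ) (hn : 1 ≤ n) (α : ℝ) (αs : Fin n → ℝ) (v : Fin n → ℂ)
    (hsum : Complex.exp (Complex.I * ∑ k, (αs k : ℂ)) = Complex.exp (Complex.I * α))
    (hv : ∀ k, ‖v k‖ = 1 / Real.sqrt n) :
    ((1 - (1 - Complex.exp (-(Complex.I * α))) •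
        Matrix.vecMulVec v (star v)) *
      Matrix.diagonal (fun j => Complex.exp (Complex.I * αs j))
        ∈ Matrix.specialUnitaryGroup (Fin n) ℂ) ∧
    (∏ j, (((1 - (1 - Complex.exp (-(Complex.I * α))) •
        Matrix.vecMulVec v (star v)) *
      Matrix.diagonal (fun j => Complex.exp (Complex.I * αs j))) j j)
      = Complex.exp (Complex.I * α) *
          (1 - (1 - Complex.exp (-(Complex.I * α))) / n) ^ n) := by
  have hn0 : (n : ℂ) ≠ 0 := Nat.cast_ne_zero.mpr (by omega)
  set c : ℂ := 1 - Complex.exp (-(Complex.I * α)) with hc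
  set P : Matrix (Fin n) (Fin n) ℂ := Matrix.vecMulVec v (star v) with hP
  set D : Matrix (Fin n) (Fin n) ℂ :=
    Matrix.diagonal (fun j => Complex.exp (Complex.I * αs j)) with hD
  -- |v k|^2 = 1/n
  have hvsq : ∀ k, (starRingEnd ℂ) (v k) * v k = 1 / (n : ℂ) := by
    intro k
    rw [mul_comm, Complex.mul_conj]
    have : Complex.normSq (v k) = 1 / (n : ℝ) := by
      rw [← Complex.sq_norm, hv k, div_pow, one_pow, Real.sq_sqrt (by positivity)]
    rw [this]; push_cast; ring
  have hdot : star v ⬝ᵥ v = 1 := by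
    simp only [dotProduct, Pi.star_apply, RCLike.star_def]
    rw [Finset.sum_congr rfl fun k _ => hvsq k]
    rw [Finset.sum_const, Finset.card_univ, Fintype.card_fin, nsmul_eq_mul]
    field_simp
  -- P is hermitian, idempotent
  have hPH : Pᴴ = P := by
    ext i j
    simp [hP, vecMulVec_apply, conjTranspose_apply, mul_comm]
  have hPP : P * P = P := by
    ext i j
    simp only [hP, mul_apply, vecMulVec_apply, Pi.star_apply]
    calc ∑ k, v i * star (v k) * (v k * star (v j))
        = (∑ k, star (v k) * v k) * (v i * star (v j)) := by
          rw [Finset.sum_mul]; apply Finset.sum_congr rfl; intro k _; ring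
      _ = v i * star (v j) := by
          rw [show (∑ k, star (v k) * v k) = star v ⬝ᵥ v from rfl, hdot, one_mul]
  have hPjj : ∀ j, P j j = 1 / (n : ℂ) := by
    intro j
    rw [hP]
    simp only [vecMulVec_apply, Pi.star_apply, RCLike.star_def]
    rw [mul_comm]; exact hvsq j
  -- conj c
  have hcexp : Complex.exp (-(Complex.I * α)) * Complex.exp (Complex.I * α) = 1 := by
    rw [← Complex.exp_add]; simp
  have hconjc : (starRingEnd ℂ) c = 1 - Complex.exp (Complex.I * α) := by
    rw [hc, map_sub, _root_.map_one, ← Complex.exp_conj, map_neg, _root_.map_mul,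
      Complex.conj_I, Complex.conj_ofReal]
    ring_nf
  have hcc : c + (starRingEnd ℂ) c = c * (starRingEnd ℂ) c := by
    rw [hconjc, hc]; linear_combination -hcexp
  -- M * Mᴴ = 1
  set M : Matrix (Fin n) (Fin n) ℂ := 1 - c • P with hM
  have hMH : Mᴴ = 1 - (starRingEnd ℂ) c • P := by
    rw [hM, conjTranspose_sub, conjTranspose_one, conjTranspose_smul, hPH]
    rfl
  have hMM : M * Mᴴ = 1 := by
    rw [hMH, hM, mul_sub, sub_mul, sub_mul, Matrix.one_mul, Matrix.one_mul,
      Matrix.mul_one, Matrix.mul_smul, Matrix.smul_mul, smul_smul, hPP,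
      mul_comm ((starRingEnd ℂ) c) c, ← hcc, add_smul]
    abel
  -- det M
  have hdetM : M.det = Complex.exp (-(Complex.I * α)) := by
    have hsmul : Matrix.vecMulVec ((-c) • v) (star v) = (-c) • P := by
      ext i j
      simp [hP, vecMulVec_apply]
      ring
    have : M = 1 + Matrix.replicateCol Unit ((-c) • v) * Matrix.replicateRow Unit (star v) := by
      rw [hM, ← vecMulVec_eq, hsmul, neg_smul, ← sub_eq_add_neg]
    rw [this, det_one_add_replicateCol_mul_replicateRow, dotProduct_smul, hdot, hc]
    simp
  -- det D
  have hdetD : D.det = Complex.exp (Complex.I * α) := by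
    rw [hD, det_diagonal, ← Complex.exp_sum, ← hsum, Finset.mul_sum]
  constructor
  · rw [Matrix.mem_specialUnitaryGroup_iff]
    constructor
    · rw [Matrix.mem_unitaryGroup_iff]
      have hDs : D * star D = 1 := by
        rw [hD, Matrix.star_eq_conjTranspose, diagonal_conjTranspose,
          diagonal_mul_diagonal]
        ext i j
        by_cases h : i = j <;>
          simp [h, Matrix.diagonal_apply, Matrix.one_apply, ← Complex.exp_conj,
            ← Complex.exp_add, Complex.conj_ofReal]
      show (M * D) * star (M * D) = 1
      rw [Matrix.star_eq_conjTranspose, conjTranspose_mul, ← Matrix.mul_assoc,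
        Matrix.mul_assoc M D, ← Matrix.star_eq_conjTranspose D, hDs, Matrix.mul_one,
        ← Matrix.star_eq_conjTranspose, ← hMM]
      rfl
    · show (M * D).det = 1
      rw [det_mul, hdetM, hdetD, hcexp]
  · have hjj : ∀ j, (M * D) j j = (1 - c / n) * Complex.exp (Complex.I * αs j) := by
      intro j
      rw [hD, mul_diagonal, hM]
      simp only [Matrix.sub_apply, Matrix.one_apply_eq, Matrix.smul_apply, hPjj j,
        smul_eq_mul]
      ring_nf
    calc ∏ j, (M * D) j j = ∏ j, (1 - c / n) * Complex.exp (Complex.I * αs j) :=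
        Finset.prod_congr rfl fun j _ => hjj j
      _ = (1 - c / n) ^ n * ∏ j, Complex.exp (Complex.I * αs j) := by
        rw [Finset.prod_mul_distrib, Finset.prod_const, Finset.card_univ, Fintype.card_fin]
      _ = Complex.exp (Complex.I * α) * (1 - c / n) ^ n := by
        rw [← Complex.exp_sum, ← Finset.mul_sum, hsum]; ring
end

section
/- Let n ≥ 1. The image of the special orthogonal group SO(n) under the diagonal product map is the real interval [−(1 − 2/n)^n, 1]: {Πd(U) : U ∈ SO(n)} = [−(1 − 2/n)^n, 1]. -/
open Matrix Finset

namespace DPSO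

variable {n : ℕ}

/-- Generalized reflection along `x`. -/
noncomputable def refl (x : Fin n → ℝ) : Matrix (Fin n) (Fin n) ℝ :=
  1 - (2 / ∑ i, x i ^ 2) • vecMulVec x x

lemma vecMulVec_sq (x : Fin n → ℝ) :
    vecMulVec x x * vecMulVec x x = (∑ i, x i ^ 2) • vecMulVec x x := by
  ext i j
  simp only [mul_apply, vecMulVec_apply, Matrix.smul_apply, smul_eq_mul, Finset.sum_mul]
  exact Finset.sum_congr rfl fun k _ => by ring

lemma refl_transpose (x : Fin n → ℝ) : (refl x)ᵀ = refl x := by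
  ext i j
  simp only [refl, transpose_apply, Matrix.sub_apply, one_apply, Matrix.smul_apply, vecMulVec_apply,
    smul_eq_mul, eq_comm (a := i)]
  ring_nf

lemma refl_mul_refl (x : Fin n → ℝ) (hx : 0 < ∑ i, x i ^ 2) : refl x * refl x = 1 := by
  set c := ∑ i, x i ^ 2 with hc
  have hcne : c ≠ 0 := ne_of_gt hx
  rw [refl, sub_mul, mul_sub, mul_sub]
  simp only [one_mul, mul_one, Matrix.smul_mul, Matrix.mul_smul, smul_smul]
  rw [vecMulVec_sq, ← hc, smul_smul]
  have h2 : 2 / c * (2 / c) * c = 2 / c + 2 / c := by field_simp; ring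
  rw [h2, add_smul]
  abel

lemma refl_det (x : Fin n → ℝ) (hx : 0 < ∑ i, x i ^ 2) : (refl x).det = -1 := by
  set c := ∑ i, x i ^ 2 with hc
  have hcne : c ≠ 0 := ne_of_gt hx
  have : refl x = 1 + replicateCol Unit ((-(2 / c)) • x) * replicateRow Unit x := by
    ext i j
    simp [refl, mul_apply, vecMulVec_apply, sub_eq_add_neg]
    ring
  rw [this, det_one_add_replicateCol_mul_replicateRow]
  have : x ⬝ᵥ ((-(2 / c)) • x) = -(2 / c) * c := by
    simp [dotProduct, Finset.mul_sum, hc]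
    exact Finset.sum_congr rfl fun k _ => by ring
  rw [this]
  field_simp
  ring


lemma col_sum_sq (V : Matrix (Fin n) (Fin n) ℝ) (h : Vᵀ * V = 1) (j : Fin n) :
    ∑ i, V i j ^ 2 = 1 := by
  have := congrFun (congrFun h j) j
  simpa [mul_apply, pow_two] using this

lemma diag_abs_le (V : Matrix (Fin n) (Fin n) ℝ) (h : Vᵀ * V = 1) (j : Fin n) :
    |V j j| ≤ 1 := by
  rw [← sq_le_one_iff_abs_le_one]
  calc V j j ^ 2 ≤ ∑ i, V i j ^ 2 :=
        Finset.single_le_sum (fun i _ => sq_nonneg (V i j)) (Finset.mem_univ j)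
    _ = 1 := col_sum_sq V h j

lemma trace_le (V : Matrix (Fin n) (Fin n) ℝ) (h : Vᵀ * V = 1) (hd : V.det = -1) :
    V.trace ≤ (n : ℝ) - 2 := by
  have h1 : (1 + V).det = 0 := by
    have key : Vᵀ * (1 + V) = (1 + V)ᵀ := by
      rw [mul_add, mul_one, h, transpose_add, transpose_one, add_comm]
    have := congrArg det key
    rw [det_mul, det_transpose, hd, det_transpose] at this
    linarith
  obtain ⟨x, hx0, hxV⟩ := Matrix.exists_mulVec_eq_zero_iff.2 h1
  have hVx : V *ᵥ x = -x := by
    have := hxV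
    rw [add_mulVec, one_mulVec] at this
    funext i
    have := congrFun this i
    simp only [Pi.add_apply, Pi.zero_apply, Pi.neg_apply] at this ⊢
    linarith
  set c := ∑ i, x i ^ 2 with hc
  have hcpos : 0 < c := by
    obtain ⟨i, hi⟩ := Function.ne_iff.1 hx0
    exact Finset.sum_pos' (fun i _ => sq_nonneg _)
      ⟨i, Finset.mem_univ i, lt_of_le_of_ne (sq_nonneg _) (Ne.symm (pow_ne_zero 2 hi))⟩
  have hR := refl_mul_refl x hcpos
  have hVR : (V * refl x)ᵀ * (V * refl x) = 1 := by
    rw [transpose_mul, mul_assoc, ← mul_assoc Vᵀ, h, one_mul, refl_transpose, hR]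
  have htr1 : (V * refl x).trace ≤ (n : ℝ) := by
    rw [Matrix.trace]
    calc ∑ j, (V * refl x).diag j ≤ ∑ _j : Fin n, (1 : ℝ) :=
          Finset.sum_le_sum fun j _ =>
            (abs_le.1 (diag_abs_le _ hVR j)).2
      _ = n := by simp
  have htr2 : (V * refl x).trace = V.trace + 2 := by
    rw [refl, mul_sub, mul_one, Matrix.mul_smul, trace_sub, trace_smul]
    have hPtr : (V * vecMulVec x x).trace = -c := by
      have : ∀ j, (V * vecMulVec x x) j j = (V *ᵥ x) j * x j := by
        intro j
        simp only [mul_apply, vecMulVec_apply, mulVec, dotProduct, Finset.sum_mul]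
        exact Finset.sum_congr rfl fun k _ => by ring
      rw [Matrix.trace]
      simp only [Matrix.diag_apply, this, hVx, Pi.neg_apply, hc]
      rw [← Finset.sum_neg_distrib]
      exact Finset.sum_congr rfl fun k _ => by ring
    rw [hPtr, ← hc]
    simp only [smul_eq_mul]
    field_simp
    ring
  linarith


lemma prod_diag_le_one (U : Matrix (Fin n) (Fin n) ℝ) (hU : Uᵀ * U = 1) :
    ∏ j, U j j ≤ 1 := by
  calc ∏ j, U j j ≤ |∏ j, U j j| := le_abs_self _
    _ = ∏ j, |U j j| := Finset.abs_prod _ _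
    _ ≤ 1 := Finset.prod_le_one (fun j _ => abs_nonneg _) (fun j _ => diag_abs_le U hU j)

lemma amgm (a : Fin n → ℝ) (hn : 0 < n) (ha : ∀ j, 0 ≤ a j) :
    ∏ j, a j ≤ ((∑ j, a j) / n) ^ n := by
  have h := Real.geom_mean_le_arith_mean (Finset.univ : Finset (Fin n))
    (fun _ => (1 : ℝ)) a (fun _ _ => zero_le_one)
    (by simpa using hn) (fun j _ => ha j)
  simp only [Real.rpow_one, one_mul, Finset.sum_const, Finset.card_univ, Fintype.card_fin,
    nsmul_eq_mul, mul_one] at h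
  have hprodnn : 0 ≤ ∏ j, a j := Finset.prod_nonneg fun j _ => ha j
  have key : ((∏ j, a j) ^ ((n : ℝ)⁻¹)) ^ (n : ℕ) = ∏ j, a j := by
    rw [← Real.rpow_natCast ((∏ j, a j) ^ ((n : ℝ)⁻¹)) n, ← Real.rpow_mul hprodnn,
      inv_mul_cancel₀ (by exact_mod_cast hn.ne'), Real.rpow_one]
  calc ∏ j, a j = ((∏ j, a j) ^ ((n : ℝ)⁻¹)) ^ (n : ℕ) := key.symm
    _ ≤ ((∑ j, a j) / n) ^ n := pow_le_pow_left₀ (Real.rpow_nonneg hprodnn _) h n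

lemma lower_bound (hn : 2 ≤ n) (U : Matrix (Fin n) (Fin n) ℝ)
    (hU : Uᵀ * U = 1) (hdet : U.det = 1) :
    -(1 - 2 / (n : ℝ)) ^ n ≤ ∏ j, U j j := by
  have hn0 : (0 : ℝ) ≤ 1 - 2 / n := by
    have h2 : (2 : ℝ) ≤ n := by exact_mod_cast hn
    have : (0:ℝ) < n := by linarith
    rw [sub_nonneg, div_le_one this]
    exact h2
  by_cases hp : 0 ≤ ∏ j, U j j
  · have : (0:ℝ) ≤ (1 - 2 / n) ^ n := pow_nonneg hn0 n
    linarith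
  push_neg at hp
  set ε : Fin n → ℝ := fun j => if U j j < 0 then -1 else 1 with hε
  have hε2 : ∀ j, ε j * ε j = 1 := by
    intro j; by_cases h : U j j < 0 <;> simp [hε, h]
  set V := diagonal ε * U with hV
  have hVdiag : ∀ j, V j j = ε j * U j j := fun j => by rw [hV, diagonal_mul]
  have hVdnn : ∀ j, 0 ≤ V j j := by
    intro j; rw [hVdiag]
    by_cases h : U j j < 0
    · simp only [hε, if_pos h]; nlinarith
    · simp only [hε, if_neg h]; push_neg at h; linarith
  have hVorth : Vᵀ * V = 1 := by
    rw [hV, transpose_mul, diagonal_transpose, mul_assoc, ← mul_assoc (diagonal ε),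
      diagonal_mul_diagonal]
    rw [show (fun i => ε i * ε i) = fun _ => (1:ℝ) from funext hε2]
    rw [show diagonal (fun _ => (1:ℝ)) = (1 : Matrix (Fin n) (Fin n) ℝ) from diagonal_one]
    rw [one_mul, hU]
  have hprodV : (∏ j, ε j) * ∏ j, U j j = ∏ j, V j j := by
    rw [← Finset.prod_mul_distrib]
    exact Finset.prod_congr rfl fun j _ => (hVdiag j).symm
  have hVprodnn : 0 ≤ ∏ j, V j j := Finset.prod_nonneg fun j _ => hVdnn j
  have hεprod : ∏ j, ε j = -1 := by
    have hsq : (∏ j, ε j) * (∏ j, ε j) = 1 := by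
      rw [← Finset.prod_mul_distrib]
      exact Finset.prod_eq_one fun j _ => hε2 j
    rcases mul_self_eq_one_iff.1 hsq with h1 | h1
    · exfalso; rw [h1, one_mul] at hprodV; linarith
    · exact h1
  have hdetV : V.det = -1 := by
    rw [hV, det_mul, det_diagonal, hdet, mul_one, hεprod]
  have htr := trace_le V hVorth hdetV
  have htr' : ∑ j, V j j ≤ (n : ℝ) - 2 := by
    have : V.trace = ∑ j, V j j := rfl
    linarith [this ▸ htr]
  have hVle : ∏ j, V j j ≤ (1 - 2 / (n:ℝ)) ^ n := by
    have hnpos : (0:ℝ) < n := by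
      have : (2:ℝ) ≤ n := by exact_mod_cast hn
      linarith
    calc ∏ j, V j j ≤ ((∑ j, V j j) / n) ^ n := amgm _ (by omega) hVdnn
      _ ≤ (1 - 2 / (n:ℝ)) ^ n := by
          apply pow_le_pow_left₀
          · exact div_nonneg (Finset.sum_nonneg fun j _ => hVdnn j) hnpos.le
          · rw [div_le_iff₀ hnpos]
            have : (1 - 2 / (n:ℝ)) * n = n - 2 := by field_simp
            linarith [htr']
  have hU_eq : ∏ j, U j j = -∏ j, V j j := by
    rw [← hprodV, hεprod]; ring
  rw [hU_eq]
  linarith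


section Path

variable (n : ℕ) (hn : 0 < n)

/-- Interpolating vector from `e₀` to the all-ones vector. -/
def wvec (t : ℝ) : Fin n → ℝ := fun i => if i = ⟨0, hn⟩ then 1 else t

lemma wvec_sum_pos (t : ℝ) : 0 < ∑ i, wvec n hn t i ^ 2 :=
  Finset.sum_pos' (fun i _ => sq_nonneg _)
    ⟨⟨0, hn⟩, Finset.mem_univ _, by simp [wvec]⟩

/-- The path in `SO(n)`. -/
noncomputable def pathM (t : ℝ) : Matrix (Fin n) (Fin n) ℝ :=
  refl (wvec n hn t) * refl (wvec n hn 0)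

lemma pathM_orth (t : ℝ) : (pathM n hn t)ᵀ * pathM n hn t = 1 := by
  rw [pathM, transpose_mul, refl_transpose, refl_transpose, mul_assoc,
    ← mul_assoc (refl (wvec n hn t)), refl_mul_refl _ (wvec_sum_pos n hn t), one_mul,
    refl_mul_refl _ (wvec_sum_pos n hn 0)]

lemma pathM_det (t : ℝ) : (pathM n hn t).det = 1 := by
  rw [pathM, det_mul, refl_det _ (wvec_sum_pos n hn t), refl_det _ (wvec_sum_pos n hn 0)]
  norm_num

lemma refl_diag (x : Fin n → ℝ) (j : Fin n) :
    refl x j j = 1 - 2 / (∑ i, x i ^ 2) * x j ^ 2 := by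
  simp only [refl, Matrix.sub_apply, one_apply_eq, Matrix.smul_apply, vecMulVec_apply, smul_eq_mul, sq]

lemma refl_wvec_zero : refl (wvec n hn 0) =
    diagonal (fun j => if j = ⟨0, hn⟩ then (-1 : ℝ) else 1) := by
  have hsum : ∑ i, wvec n hn 0 i ^ 2 = 1 := by
    have : ∀ i, wvec n hn 0 i ^ 2 = if i = ⟨0, hn⟩ then (1:ℝ) else 0 := by
      intro i; by_cases h : i = ⟨0, hn⟩ <;> simp [wvec, h]
    simp [this]
  ext i j
  by_cases hij : i = j
  · subst hij
    by_cases hi : i = ⟨0, hn⟩ <;>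
      simp [refl, vecMulVec_apply, one_apply, hsum, wvec, hi, diagonal] <;> norm_num
  · have h0 : wvec n hn 0 i * wvec n hn 0 j = 0 := by
      by_cases hi : i = ⟨0, hn⟩
      · have hj : ¬ j = ⟨0, hn⟩ := fun h => hij (h ▸ hi)
        simp [wvec, hi, hj]
      · simp [wvec, hi]
    simp [refl, vecMulVec_apply, one_apply, hsum, hij, h0, diagonal_apply_ne _ hij]

lemma pathM_diag (t : ℝ) (j : Fin n) :
    pathM n hn t j j =
      (1 - 2 / (∑ i, wvec n hn t i ^ 2) * wvec n hn t j ^ 2) *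
        (if j = ⟨0, hn⟩ then (-1 : ℝ) else 1) := by
  rw [pathM, refl_wvec_zero, mul_diagonal, refl_diag]

lemma pathM_continuous :
    Continuous fun t => ∏ j, pathM n hn t j j := by
  simp only [pathM_diag]
  apply continuous_finset_prod
  intro j _
  apply Continuous.mul _ continuous_const
  apply Continuous.sub continuous_const
  apply Continuous.mul
  · apply Continuous.div continuous_const
    · apply continuous_finset_sum
      intro i _
      have : Continuous fun t : ℝ => wvec n hn t i := by
        unfold wvec
        by_cases h : i = ⟨0, hn⟩ <;> simp [h] <;> [exact continuous_const; exact continuous_id]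
      exact this.pow 2
    · exact fun t => (wvec_sum_pos n hn t).ne'
  · have : Continuous fun t : ℝ => wvec n hn t j := by
      unfold wvec
      by_cases h : j = ⟨0, hn⟩ <;> simp [h] <;> [exact continuous_const; exact continuous_id]
    exact this.pow 2

lemma pathM_zero : ∏ j, pathM n hn 0 j j = 1 := by
  have : pathM n hn 0 = 1 := by
    rw [pathM, refl_mul_refl _ (wvec_sum_pos n hn 0)]
  rw [this]
  simp

lemma pathM_one : ∏ j, pathM n hn 1 j j = -(1 - 2 / (n : ℝ)) ^ n := by
  have hw : ∀ i, wvec n hn 1 i = 1 := by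
    intro i; by_cases h : i = ⟨0, hn⟩ <;> simp [wvec, h]
  have hsum : ∑ i, wvec n hn 1 i ^ 2 = (n : ℝ) := by simp [hw]
  calc ∏ j, pathM n hn 1 j j
      = ∏ j, ((1 - 2 / (n:ℝ)) * (if j = (⟨0, hn⟩ : Fin n) then (-1:ℝ) else 1)) := by
        apply Finset.prod_congr rfl
        intro j _
        rw [pathM_diag, hsum, hw]
        norm_num
    _ = (1 - 2 / (n:ℝ)) ^ n * ∏ j, (if j = (⟨0, hn⟩ : Fin n) then (-1:ℝ) else 1) := by
        rw [Finset.prod_mul_distrib, Finset.prod_const, Finset.card_univ, Fintype.card_fin]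
    _ = -(1 - 2 / (n : ℝ)) ^ n := by
        rw [Finset.prod_ite_eq' Finset.univ (⟨0, hn⟩ : Fin n) (fun _ => (-1:ℝ))]
        simp

end Path

end DPSO

/-- The image of `SO(n)` under the diagonal product map is the interval
`[−(1 − 2/n)ⁿ, 1]`. -/
theorem diagonalProduct_specialOrthogonalGroup_image (n : ℕ) (hn : 1 ≤ n) :
    {r : ℝ | ∃ U ∈ Matrix.specialOrthogonalGroup (Fin n) ℝ, (∏ j, U j j) = r} =
      Set.Icc (-(1 - 2 / (n : ℝ)) ^ n) 1 := by
  have hn0 : 0 < n := hn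
  ext r
  simp only [Set.mem_setOf_eq, Set.mem_Icc]
  constructor
  · rintro ⟨U, hU, rfl⟩
    obtain ⟨hU1, hdet⟩ := Matrix.mem_specialUnitaryGroup_iff.1 hU
    have horth : Uᵀ * U = 1 := by
      have := Matrix.mem_unitaryGroup_iff'.1 hU1
      rwa [Matrix.star_eq_conjTranspose, Matrix.conjTranspose_eq_transpose_of_trivial] at this
    refine ⟨?_, DPSO.prod_diag_le_one U horth⟩
    rcases eq_or_lt_of_le hn with h1 | h2
    · obtain rfl : n = 1 := h1.symm
      have hp : ∏ j, U j j = U 0 0 := Fin.prod_univ_one _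
      have hd : U 0 0 = 1 := by rw [← Matrix.det_fin_one U]; exact hdet
      rw [hp, hd]
      norm_num
    · exact DPSO.lower_bound (by omega) U horth hdet
  · rintro ⟨hr1, hr2⟩
    have hcont := (DPSO.pathM_continuous n hn0).continuousOn (s := Set.Icc 0 1)
    have hsub := intermediate_value_Icc' (by norm_num : (0:ℝ) ≤ 1) hcont
    rw [DPSO.pathM_zero, DPSO.pathM_one] at hsub
    obtain ⟨t, _, ht⟩ := hsub ⟨hr1, hr2⟩
    refine ⟨DPSO.pathM n hn0 t, ?_, ht⟩
    refine Matrix.mem_specialUnitaryGroup_iff.2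
      ⟨Matrix.mem_unitaryGroup_iff'.2 ?_, DPSO.pathM_det n hn0 t⟩
    rw [Matrix.star_eq_conjTranspose, Matrix.conjTranspose_eq_transpose_of_trivial]
    exact DPSO.pathM_orth n hn0 t
end

section
/- Let n ≥ 1 and U ∈ SO(n). Then Πd(U) = −(1 − 2/n)^n if and only if U = (I − 2 u uᵀ) · diag(σ₁, …, σₙ) for some vector u ∈ ℝⁿ with |u_k| = 1/√n for all k and signs σ_j ∈ {−1, 1} with ∏_j σ_j = −1. -/
open Matrix

/-- AM-GM equality helper. -/
lemma amgm_eq {n : ℕ} {c : ℝ} (hc : 0 < c) (y : Fin n → ℝ)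
    (hy : ∀ j, 0 < y j) (hsum : ∑ j, y j ≤ n * c) (hprod : ∏ j, y j = c ^ n) :
    ∀ j, y j = c := by
  have hprod1 : ∏ j, y j / c = 1 := by
    rw [Finset.prod_div_distrib, hprod, Finset.prod_const]
    simp [ne_of_gt hc]
  have hlog : ∑ j, Real.log (y j / c) = 0 := by
    rw [← Real.log_prod (fun j _ => ne_of_gt (div_pos (hy j) hc)), hprod1, Real.log_one]
  have hterm : ∀ j : Fin n, 0 ≤ (y j / c - 1) - Real.log (y j / c) := by
    intro j
    have := Real.log_le_sub_one_of_pos (x := y j / c) (div_pos (hy j) hc)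
    linarith
  have hsum0 : ∑ j, ((y j / c - 1) - Real.log (y j / c)) = 0 := by
    have h1 : ∑ j, ((y j / c - 1) - Real.log (y j / c))
        = (∑ j, y j) / c - n := by
      rw [Finset.sum_sub_distrib, hlog, Finset.sum_sub_distrib, ← Finset.sum_div]
      simp
    have h2 : (∑ j, y j) / c - (n : ℝ) ≤ 0 := by
      rw [sub_nonpos, div_le_iff₀ hc]
      linarith [hsum]
    have h3 : 0 ≤ ∑ j, ((y j / c - 1) - Real.log (y j / c)) :=
      Finset.sum_nonneg fun j _ => hterm j
    linarith [h1 ▸ h3, h1 ▸ h2, h1]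
  intro j
  have hj := (Finset.sum_eq_zero_iff_of_nonneg (fun j _ => hterm j)).mp hsum0 j (Finset.mem_univ j)
  by_contra hne
  have hne' : y j / c ≠ 1 := by
    intro h; exact hne (by field_simp at h; linarith)
  have := Real.log_lt_sub_one_of_pos (x := y j / c) (div_pos (hy j) hc) hne'
  linarith


lemma psd_diag_nonneg {n : ℕ} (B : Matrix (Fin n) (Fin n) ℝ)
    (hpos : ∀ z : Fin n → ℝ, 0 ≤ z ⬝ᵥ (B *ᵥ z)) (j : Fin n) : 0 ≤ B j j := by
  have := hpos (Pi.single j 1)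
  simpa [Matrix.mulVec_single, single_dotProduct] using this

lemma psd_trace_zero_eq_zero {n : ℕ} (B : Matrix (Fin n) (Fin n) ℝ)
    (hsym : Bᵀ = B) (hpos : ∀ z : Fin n → ℝ, 0 ≤ z ⬝ᵥ (B *ᵥ z))
    (htr : B.trace = 0) : B = 0 := by
  have hdiag : ∀ j, B j j = 0 := by
    intro j
    have h := (Finset.sum_eq_zero_iff_of_nonneg
      (fun j _ => psd_diag_nonneg B hpos j)).mp htr j (Finset.mem_univ j)
    exact h
  have hbil : ∀ (j k : Fin n) (t : ℝ),
      ((Pi.single j 1 : Fin n → ℝ) + t • (Pi.single k 1 : Fin n → ℝ)) ⬝ᵥ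
        (B *ᵥ ((Pi.single j 1 : Fin n → ℝ) + t • (Pi.single k 1 : Fin n → ℝ))) = t * (B j k + B k j) := by
    intro j k t
    simp [Matrix.mulVec_add, Matrix.mulVec_smul, dotProduct_add,
      add_dotProduct, smul_dotProduct, dotProduct_smul,
      Matrix.mulVec_single, single_dotProduct, smul_eq_mul, hdiag]
    ring
  ext j k
  have h1 := hpos ((Pi.single j 1 : Fin n → ℝ) + (1 : ℝ) • (Pi.single k 1 : Fin n → ℝ))
  have h2 := hpos ((Pi.single j 1 : Fin n → ℝ) + (-1 : ℝ) • (Pi.single k 1 : Fin n → ℝ))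
  rw [hbil] at h1 h2
  have hsymjk : B k j = B j k := by
    have := congrFun (congrFun hsym j) k
    simpa [Matrix.transpose_apply] using this
  simp only [Matrix.zero_apply]
  nlinarith [h1, h2]


lemma dot_self_nonneg {n : ℕ} (w : Fin n → ℝ) : 0 ≤ w ⬝ᵥ w :=
  Finset.sum_nonneg fun i _ => mul_self_nonneg _

lemma vmv_mulVec {n : ℕ} (u z : Fin n → ℝ) :
    (vecMulVec u u) *ᵥ z = (u ⬝ᵥ z) • u := by
  funext i
  simp only [Matrix.mulVec, Matrix.vecMulVec_apply, dotProduct,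
    Pi.smul_apply, smul_eq_mul, Finset.sum_mul]
  exact Finset.sum_congr rfl fun k _ => by ring

lemma quad_split {n : ℕ} (A : Matrix (Fin n) (Fin n) ℝ) (u z : Fin n → ℝ)
    (huu : u ⬝ᵥ u = 1) (hAu : A *ᵥ u = (4 : ℝ) • u)
    (hAu' : ∀ w, u ⬝ᵥ (A *ᵥ w) = 4 * (u ⬝ᵥ w)) :
    z ⬝ᵥ ((A - (4 : ℝ) • vecMulVec u u) *ᵥ z)
      = (z - (u ⬝ᵥ z) • u) ⬝ᵥ (A *ᵥ (z - (u ⬝ᵥ z) • u)) := by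
  have h5 : z ⬝ᵥ u = u ⬝ᵥ z := dotProduct_comm _ _
  have h6 : u ⬝ᵥ (A *ᵥ z) = 4 * (u ⬝ᵥ z) := hAu' z
  simp only [Matrix.sub_mulVec, Matrix.smul_mulVec, vmv_mulVec,
    Matrix.mulVec_sub, Matrix.mulVec_smul, hAu, sub_dotProduct,
    dotProduct_sub, smul_dotProduct, dotProduct_smul,
    smul_eq_mul, smul_smul, h5, h6, huu]
  ring

lemma key {n : ℕ} (hn : 3 ≤ n) (V : Matrix (Fin n) (Fin n) ℝ) (hV : Vᵀ * V = 1)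
    (hdet : V.det = -1) (hdiag_pos : ∀ j, 0 < V j j)
    (hdiag : ∏ j, V j j = (1 - 2 / (n : ℝ)) ^ n) :
    ∃ u : Fin n → ℝ, (∀ k, |u k| = 1 / Real.sqrt n) ∧
      V = 1 - (2 : ℝ) • vecMulVec u u := by
  have hn3 : (3 : ℝ) ≤ (n : ℝ) := by exact_mod_cast hn
  have hn0 : (0 : ℝ) < n := by linarith
  have hc : 0 < 1 - 2 / (n : ℝ) := by
    rw [sub_pos, div_lt_one hn0]; linarith
  set c : ℝ := 1 - 2 / (n : ℝ) with hcdef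
  have hVVt : V * Vᵀ = 1 := mul_eq_one_comm.mp hV
  -- det (1 + V) = 0
  have hdet10 : (1 + V).det = 0 := by
    have e : 1 + V = V * (1 + Vᵀ) := by
      rw [Matrix.mul_add, Matrix.mul_one, hVVt, add_comm]
    have h2 : (1 + V).det = -(1 + V).det := by
      calc (1 + V).det = V.det * (1 + Vᵀ).det := by rw [e, Matrix.det_mul]
        _ = -((1 + V)ᵀ).det := by
            rw [hdet, Matrix.transpose_add, Matrix.transpose_one]; ring
        _ = -(1 + V).det := by rw [Matrix.det_transpose]
    linarith
  obtain ⟨x, hx0, hxV⟩ := Matrix.exists_mulVec_eq_zero_iff.mpr hdet10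
  have hVx : V *ᵥ x = -x := by
    rw [Matrix.add_mulVec, Matrix.one_mulVec] at hxV
    exact eq_neg_of_add_eq_zero_right hxV
  have hxx : 0 < x ⬝ᵥ x := by
    obtain ⟨i, hi⟩ := Function.ne_iff.mp hx0
    exact Finset.sum_pos' (fun k _ => mul_self_nonneg _)
      ⟨i, Finset.mem_univ i, mul_self_pos.mpr hi⟩
  set r : ℝ := Real.sqrt (x ⬝ᵥ x) with hrdef
  have hr : 0 < r := Real.sqrt_pos.mpr hxx
  have hrr : r * r = x ⬝ᵥ x := Real.mul_self_sqrt hxx.le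
  set u : Fin n → ℝ := r⁻¹ • x with hudef
  have huu : u ⬝ᵥ u = 1 := by
    rw [hudef, smul_dotProduct, dotProduct_smul, smul_eq_mul,
      smul_eq_mul, ← hrr]
    field_simp
  have hVu : V *ᵥ u = -u := by
    rw [hudef, Matrix.mulVec_smul, hVx, smul_neg]
  have hVtu : Vᵀ *ᵥ u = -u := by
    have h1 : Vᵀ *ᵥ (V *ᵥ u) = u := by
      rw [Matrix.mulVec_mulVec, hV, Matrix.one_mulVec]
    rw [hVu, Matrix.mulVec_neg] at h1
    exact neg_eq_iff_eq_neg.mp h1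
  set A : Matrix (Fin n) (Fin n) ℝ := (2 : ℝ) • 1 - V - Vᵀ with hAdef
  have hAT : Aᵀ = A := by
    rw [hAdef, Matrix.transpose_sub, Matrix.transpose_sub, Matrix.transpose_smul,
      Matrix.transpose_one, Matrix.transpose_transpose]
    exact sub_right_comm _ _ _
  have hAu : A *ᵥ u = (4 : ℝ) • u := by
    rw [hAdef, Matrix.sub_mulVec, Matrix.sub_mulVec, Matrix.smul_mulVec,
      Matrix.one_mulVec, hVu, hVtu]
    funext i; simp [smul_eq_mul]; ring
  have hAq : ∀ z, z ⬝ᵥ (A *ᵥ z) = (z - V *ᵥ z) ⬝ᵥ (z - V *ᵥ z) := by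
    intro z
    have h1 : (V *ᵥ z) ⬝ᵥ (V *ᵥ z) = z ⬝ᵥ z := by
      rw [Matrix.dotProduct_mulVec, ← Matrix.mulVec_transpose,
        Matrix.mulVec_mulVec, hV, Matrix.one_mulVec]
    have h2 : z ⬝ᵥ (Vᵀ *ᵥ z) = (V *ᵥ z) ⬝ᵥ z := by
      rw [Matrix.dotProduct_mulVec, Matrix.vecMul_transpose]
    have h3 : z ⬝ᵥ (V *ᵥ z) = (V *ᵥ z) ⬝ᵥ z := dotProduct_comm _ _
    rw [hAdef]
    simp only [Matrix.sub_mulVec, Matrix.smul_mulVec, Matrix.one_mulVec,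
      dotProduct_sub, sub_dotProduct, dotProduct_smul,
      smul_eq_mul]
    linarith
  have hApos : ∀ z, 0 ≤ z ⬝ᵥ (A *ᵥ z) := fun z => by
    rw [hAq]; exact dot_self_nonneg _
  have hAu' : ∀ w, u ⬝ᵥ (A *ᵥ w) = 4 * (u ⬝ᵥ w) := by
    intro w
    rw [Matrix.dotProduct_mulVec]
    have hv : u ᵥ* A = (4 : ℝ) • u := by
      rw [← hAT, Matrix.vecMul_transpose, hAu]
    rw [hv, smul_dotProduct, smul_eq_mul]
  set B : Matrix (Fin n) (Fin n) ℝ := A - (4 : ℝ) • vecMulVec u u with hBdef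
  have hBq : ∀ z, z ⬝ᵥ (B *ᵥ z)
      = (z - (u ⬝ᵥ z) • u) ⬝ᵥ (A *ᵥ (z - (u ⬝ᵥ z) • u)) := by
    intro z
    rw [hBdef]
    exact quad_split A u z huu hAu hAu'
  have hBpos : ∀ z, 0 ≤ z ⬝ᵥ (B *ᵥ z) := fun z => by rw [hBq]; exact hApos _
  have hBT : Bᵀ = B := by
    rw [hBdef, Matrix.transpose_sub, hAT, Matrix.transpose_smul]
    congr 1
    funext i j
    simp [Matrix.vecMulVec_apply, mul_comm]
  -- traces
  have htrV : V.trace = ∑ j, V j j := rfl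
  have htrA : A.trace = 2 * n - 2 * ∑ j, V j j := by
    rw [hAdef, Matrix.trace_sub, Matrix.trace_sub, Matrix.trace_smul,
      Matrix.trace_transpose, Matrix.trace_one, htrV]
    simp [smul_eq_mul]
    ring
  have htrvv : (vecMulVec u u).trace = 1 := by
    have : (vecMulVec u u).trace = u ⬝ᵥ u := rfl
    rw [this, huu]
  have htrB : B.trace = 2 * n - 2 * (∑ j, V j j) - 4 := by
    rw [hBdef, Matrix.trace_sub, Matrix.trace_smul, htrvv, htrA]
    simp [smul_eq_mul]
  have htrB_nonneg : 0 ≤ B.trace :=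
    Finset.sum_nonneg fun j _ => psd_diag_nonneg B hBpos j
  have hsumle : ∑ j, V j j ≤ n * c := by
    have : (n : ℝ) * c = n - 2 := by
      rw [hcdef]; field_simp
    rw [this]; rw [htrB] at htrB_nonneg; linarith
  have hall : ∀ j, V j j = c := amgm_eq hc _ hdiag_pos hsumle hdiag
  have hsum : ∑ j, V j j = n - 2 := by
    rw [Finset.sum_congr rfl fun j _ => hall j, Finset.sum_const]
    simp [hcdef]
    field_simp
  have htrB0 : B.trace = 0 := by rw [htrB, hsum]; ring
  have hB0 : B = 0 := psd_trace_zero_eq_zero B hBT hBpos htrB0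
  have hAeq : A = (4 : ℝ) • vecMulVec u u := by
    have := sub_eq_zero.mp hB0
    rw [← hBdef] at *
    exact sub_eq_zero.mp hB0
  -- V fixes the orthogonal complement of u
  have hVw : ∀ z, u ⬝ᵥ z = 0 → V *ᵥ z = z := by
    intro z hz
    have h0 : z ⬝ᵥ (A *ᵥ z) = 0 := by
      rw [hAeq, Matrix.smul_mulVec, vmv_mulVec, hz]
      simp
    rw [hAq] at h0
    have := dotProduct_self_eq_zero.mp h0
    have := sub_eq_zero.mp this
    exact this.symm
  have hVz : ∀ z, V *ᵥ z = z - (2 * (u ⬝ᵥ z)) • u := by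
    intro z
    set q : ℝ := u ⬝ᵥ z with hqdef
    set w : Fin n → ℝ := z - q • u with hwdef
    have hcw : u ⬝ᵥ w = 0 := by
      rw [hwdef, dotProduct_sub, dotProduct_smul, huu, smul_eq_mul,
        mul_one, ← hqdef, sub_self]
    have hz : V *ᵥ z = V *ᵥ w + q • (V *ᵥ u) := by
      rw [← Matrix.mulVec_smul, ← Matrix.mulVec_add, hwdef]
      congr 1
      funext i; simp
    rw [hz, hVu, hVw w hcw]
    funext i
    simp only [hwdef, Pi.sub_apply, Pi.add_apply, Pi.smul_apply, Pi.neg_apply,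
      smul_eq_mul]
    ring
  have hVmat : V = 1 - (2 : ℝ) • vecMulVec u u := by
    ext i j
    have h := congrFun (hVz (Pi.single j 1)) i
    rw [Matrix.mulVec_single_one, Matrix.col_apply] at h
    have hd : u ⬝ᵥ Pi.single j 1 = u j := by
      rw [dotProduct_single, mul_one]
    rw [hd] at h
    rw [h]
    simp only [Matrix.sub_apply, Matrix.smul_apply, Matrix.vecMulVec_apply,
      Matrix.one_apply, Pi.sub_apply, Pi.smul_apply, smul_eq_mul]
    rw [Pi.single_apply]
    by_cases hij : i = j <;> simp [hij] <;> ring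
  refine ⟨u, ?_, hVmat⟩
  intro k
  have h1 : V k k = c := hall k
  have h2 : V k k = 1 - 2 * (u k * u k) := by
    rw [hVmat]
    simp [Matrix.vecMulVec_apply]
  have h3 : u k * u k = 1 / n := by
    rw [h1, hcdef] at h2
    field_simp at h2 ⊢
    linarith
  have h4 : u k ^ 2 = 1 / n := by rw [sq]; exact h3
  rw [← Real.sqrt_sq_eq_abs, h4, one_div, one_div, Real.sqrt_inv]

/-- For `U ∈ SO(n)`, the diagonal product equals `−(1 − 2/n)ⁿ` iff
`U = (I − 2uuᵀ) · diag(σ₁, …, σₙ)` for some `u ∈ ℝⁿ` with `|u_k| = 1/√n` for all `k`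
and signs `σⱼ ∈ {−1, 1}` with `∏ⱼ σⱼ = −1`. -/
theorem diagonalProduct_specialOrthogonalGroup_eq_min_iff (n : ℕ) (hn : 1 ≤ n)
    (U : Matrix (Fin n) (Fin n) ℝ)
    (hU : U ∈ Matrix.specialOrthogonalGroup (Fin n) ℝ) :
    (∏ j, U j j) = -(1 - 2 / (n : ℝ)) ^ n ↔
      ∃ (u : Fin n → ℝ) (σ : Fin n → ℝ),
        (∀ k, |u k| = 1 / Real.sqrt n) ∧
        (∀ j, σ j = 1 ∨ σ j = -1) ∧ (∏ j, σ j) = -1 ∧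
        U = (1 - (2 : ℝ) • Matrix.vecMulVec u u) * Matrix.diagonal σ := by
  obtain ⟨hUo, hUdet⟩ : Uᵀ * U = 1 ∧ U.det = 1 := by
    rw [Matrix.mem_specialOrthogonalGroup_iff] at hU
    obtain ⟨h1, h2⟩ := hU
    rw [Matrix.mem_orthogonalGroup_iff'] at h1
    refine ⟨?_, h2⟩
    rw [← h1]
  constructor
  · intro h
    by_cases hone : n = 1
    · subst hone
      refine ⟨fun _ => 1, fun _ => -1, ?_, fun _ => Or.inr rfl, ?_, ?_⟩
      · intro k; norm_num
      · simp
      · have h00 : U 0 0 = 1 := by rw [← Matrix.det_fin_one U]; exact hUdet.symm ▸ rfl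
        ext i j
        have hi : i = 0 := Subsingleton.elim i 0
        have hj : j = 0 := Subsingleton.elim j 0
        subst hi; subst hj
        rw [Matrix.mul_diagonal]
        simp [Matrix.vecMulVec_apply, h00]
        norm_num
    · by_cases htwo : n = 2
      · subst htwo
        have had : U 0 0 * U 1 1 = 0 := by
          rw [Fin.prod_univ_two] at h
          rw [h]; norm_num
        have e00 := congrFun (congrFun hUo 0) 0
        have e01 := congrFun (congrFun hUo 0) 1
        have e11 := congrFun (congrFun hUo 1) 1
        simp only [Matrix.mul_apply, Fin.sum_univ_two, Matrix.transpose_apply,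
          Matrix.one_apply_eq, Matrix.one_apply_ne, ne_eq, Fin.ext_iff] at e00 e01 e11
        rw [Matrix.det_fin_two] at hUdet
        norm_num at e01
        -- e00 : U 0 0 * U 0 0 + U 1 0 * U 1 0 = 1
        -- e01 : U 0 0 * U 0 1 + U 1 0 * U 1 1 = 0
        -- e11 : U 0 1 * U 0 1 + U 1 1 * U 1 1 = 1
        have ha : U 0 0 = 0 := by
          rcases mul_eq_zero.mp had with ha | hd
          · exact ha
          · -- U 1 1 = 0 : then U 0 1 * U 0 1 = 1, and U 0 0 * U 0 1 = 0
            have hb2 : U 0 1 * U 0 1 = 1 := by nlinarith [e11, hd]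
            have hb0 : U 0 1 ≠ 0 := by intro hb; rw [hb] at hb2; norm_num at hb2
            have : U 0 0 * U 0 1 = 0 := by nlinarith [e01, hd]
            rcases mul_eq_zero.mp this with h' | h'
            · exact h'
            · exact absurd h' hb0
        have hc2 : U 1 0 * U 1 0 = 1 := by nlinarith [e00, ha]
        have hc0 : U 1 0 ≠ 0 := by intro hcc; rw [hcc] at hc2; norm_num at hc2
        have hd0 : U 1 1 = 0 := by
          have : U 1 0 * U 1 1 = 0 := by nlinarith [e01, ha]
          rcases mul_eq_zero.mp this with h' | h'
          · exact absurd h' hc0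
          · exact h'
        have hb : U 0 1 = -U 1 0 := by
          -- det : U 0 0 * U 1 1 - U 0 1 * U 1 0 = 1
          have hdet' : -(U 0 1 * U 1 0) = 1 := by nlinarith [hUdet, ha, hd0]
          have := hc2
          nlinarith [hdet', hc2]
        have hcpm : U 1 0 = 1 ∨ U 1 0 = -1 := mul_self_eq_one_iff.mp hc2
        have hs2 : Real.sqrt 2 * Real.sqrt 2 = 2 := Real.mul_self_sqrt (by norm_num)
        have hs0 : Real.sqrt 2 ≠ 0 := by positivity
        have hinv : (Real.sqrt 2)⁻¹ * (Real.sqrt 2)⁻¹ = 1 / 2 := by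
          rw [← mul_inv, hs2]; norm_num
        refine ⟨fun _ => 1 / Real.sqrt 2, ![-U 1 0, U 1 0], ?_, ?_, ?_, ?_⟩
        · intro k
          rw [abs_of_pos (by positivity)]
          norm_num
        · intro j
          fin_cases j
          · rcases hcpm with h' | h' <;> simp [h']
          · rcases hcpm with h' | h' <;> simp [h']
        · rw [Fin.prod_univ_two]
          simp only [Matrix.cons_val_zero, Matrix.cons_val_one, Matrix.head_cons]
          nlinarith [hc2]
        · ext i j
          rw [Matrix.mul_diagonal]
          fin_cases i <;> fin_cases j <;>
            simp [Matrix.vecMulVec_apply, Matrix.one_apply, div_mul_div_comm, hs2,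
              hinv, ha, hb, hd0] <;> norm_num
      · have hge : 3 ≤ n := by omega
        have hn3 : (3 : ℝ) ≤ (n : ℝ) := by exact_mod_cast hge
        have hn0 : (0 : ℝ) < n := by linarith
        have hc : (0 : ℝ) < 1 - 2 / (n : ℝ) := by rw [sub_pos, div_lt_one hn0]; linarith
        have hcn : (0 : ℝ) < (1 - 2 / (n : ℝ)) ^ n := pow_pos hc n
        have hdne : ∀ j, U j j ≠ 0 := by
          intro j hj
          have : (∏ j, U j j) = 0 := Finset.prod_eq_zero (Finset.mem_univ j) hj
          rw [h] at this; linarith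
        set ε : Fin n → ℝ := fun j => U j j / |U j j| with hεdef
        have hεpm : ∀ j, ε j = 1 ∨ ε j = -1 := by
          intro j
          rcases (hdne j).lt_or_gt with hj | hj
          · right; show U j j / |U j j| = -1
            rw [abs_of_neg hj, div_neg, div_self (hdne j)]
          · left; show U j j / |U j j| = 1
            rw [abs_of_pos hj]; exact div_self (ne_of_gt hj)
        have hεsq : ∀ j, ε j * ε j = 1 := by
          intro j; rcases hεpm j with h' | h' <;> rw [h'] <;> ring
        have hdε : ∀ j, U j j * ε j = |U j j| := by
          intro j
          have habs : |U j j| ≠ 0 := abs_ne_zero.mpr (hdne j)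
          show U j j * (U j j / |U j j|) = |U j j|
          field_simp
          exact (sq_abs _).symm
        have hprodabs : ∏ j, |U j j| = (1 - 2 / (n : ℝ)) ^ n := by
          rw [← Finset.abs_prod, h, abs_neg, abs_of_pos hcn]
        have hεprod : (∏ j, ε j) = -1 := by
          show (∏ j, U j j / |U j j|) = -1
          rw [Finset.prod_div_distrib, h, hprodabs, neg_div, div_self (ne_of_gt hcn)]
        set V : Matrix (Fin n) (Fin n) ℝ := U * diagonal ε with hVdef
        have hDD : diagonal ε * diagonal ε = 1 := by
          rw [Matrix.diagonal_mul_diagonal]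
          have : (fun i => ε i * ε i) = fun _ => (1 : ℝ) := funext fun i => hεsq i
          rw [this, Matrix.diagonal_one]
        have hVo : Vᵀ * V = 1 := by
          rw [hVdef, Matrix.transpose_mul, Matrix.diagonal_transpose, Matrix.mul_assoc,
            ← Matrix.mul_assoc Uᵀ U (diagonal ε), hUo, Matrix.one_mul, hDD]
        have hVdet : V.det = -1 := by
          rw [hVdef, Matrix.det_mul, Matrix.det_diagonal, hUdet, hεprod, one_mul]
        have hVdiag : ∀ j, V j j = |U j j| := by
          intro j
          rw [hVdef, Matrix.mul_diagonal, hdε]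
        have hVdiag_pos : ∀ j, 0 < V j j := fun j =>
          (hVdiag j) ▸ abs_pos.mpr (hdne j)
        have hVprod : ∏ j, V j j = (1 - 2 / (n : ℝ)) ^ n := by
          rw [Finset.prod_congr rfl fun j _ => hVdiag j, hprodabs]
        obtain ⟨u, hu1, hu2⟩ := key hge V hVo hVdet hVdiag_pos hVprod
        refine ⟨u, ε, hu1, hεpm, hεprod, ?_⟩
        rw [← hu2, hVdef, Matrix.mul_assoc, hDD, Matrix.mul_one]
  · rintro ⟨u, σ, hu, hσ, hσp, hUeq⟩
    have hn0 : (0 : ℝ) < n := by exact_mod_cast hn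
    have hsq : ∀ k, u k * u k = 1 / n := by
      intro k
      have : |u k| * |u k| = (1 / Real.sqrt n) * (1 / Real.sqrt n) := by rw [hu k]
      rw [abs_mul_abs_self] at this
      rw [this]
      rw [div_mul_div_comm, one_mul, Real.mul_self_sqrt hn0.le]
    have hdiag : ∀ j, U j j = (1 - 2 / n) * σ j := by
      intro j
      rw [hUeq, Matrix.mul_diagonal]
      congr 1
      simp only [Matrix.sub_apply, Matrix.smul_apply, Matrix.one_apply_eq,
        Matrix.vecMulVec_apply, smul_eq_mul, hsq j]
      ring
    calc ∏ j, U j j = ∏ j, (1 - 2 / (n : ℝ)) * σ j :=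
          Finset.prod_congr rfl fun j _ => hdiag j
      _ = (1 - 2 / (n : ℝ)) ^ n * ∏ j, σ j := by
          rw [Finset.prod_mul_distrib, Finset.prod_const, Finset.card_univ,
            Fintype.card_fin]
      _ = -(1 - 2 / (n : ℝ)) ^ n := by rw [hσp]; ring
end

section
/- Let n ≥ 3 and define θ : [−π, π] → ℝ by θ(α) = α − n · arctan(sin α / (n − 1 + cos α)). Then θ is a continuous strictly increasing bijection of [−π, π] onto itself, with θ(−π) = −π, θ(0) = 0 and θ(π) = π. -/
open Real

/-- For `n ≥ 3`, the polar-angle function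
`θ(α) = α − n · arctan(sin α / (n − 1 + cos α))` is a continuous strictly increasing
bijection of `[−π, π]` onto itself, with `θ(−π) = −π`, `θ(0) = 0` and `θ(π) = π`. -/
theorem theta_strictMono_bijection (n : ℕ) (hn : 3 ≤ n) :
    ContinuousOn
      (fun α : ℝ => α - n * Real.arctan (Real.sin α / ((n : ℝ) - 1 + Real.cos α)))
      (Set.Icc (-π) π) ∧
    StrictMonoOn
      (fun α : ℝ => α - n * Real.arctan (Real.sin α / ((n : ℝ) - 1 + Real.cos α)))
      (Set.Icc (-π) π) ∧
    (fun α : ℝ => α - n * Real.arctan (Real.sin α / ((n : ℝ) - 1 + Real.cos α))) ''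
      Set.Icc (-π) π = Set.Icc (-π) π ∧
    (-π : ℝ) - n * Real.arctan (Real.sin (-π) / ((n : ℝ) - 1 + Real.cos (-π))) = -π ∧
    (0 : ℝ) - n * Real.arctan (Real.sin 0 / ((n : ℝ) - 1 + Real.cos 0)) = 0 ∧
    π - n * Real.arctan (Real.sin π / ((n : ℝ) - 1 + Real.cos π)) = π := by
  have hn3 : (3 : ℝ) ≤ (n : ℝ) := by exact_mod_cast hn
  set f : ℝ → ℝ := fun α => α - n * Real.arctan (Real.sin α / ((n : ℝ) - 1 + Real.cos α))
    with hf
  have hne : ∀ x : ℝ, (n : ℝ) - 1 + Real.cos x ≠ 0 := by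
    intro x
    nlinarith [Real.neg_one_le_cos x]
  have hcont : Continuous f := by
    apply continuous_id.sub
    exact continuous_const.mul
      (Real.continuous_arctan.comp (Real.continuous_sin.div (by continuity) hne))
  -- derivative
  have hderiv : ∀ x : ℝ, HasDerivAt f
      (1 - n * ((((n : ℝ) - 1) * Real.cos x + 1) /
        ((((n : ℝ) - 1) + Real.cos x) ^ 2 + Real.sin x ^ 2))) x := by
    intro x
    have hd := hne x
    have hq : HasDerivAt (fun α => Real.sin α / ((n : ℝ) - 1 + Real.cos α))
        ((Real.cos x * ((n : ℝ) - 1 + Real.cos x) - Real.sin x * (0 + -Real.sin x)) /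
          ((n : ℝ) - 1 + Real.cos x) ^ 2) x :=
      (Real.hasDerivAt_sin x).div
        ((hasDerivAt_const x ((n : ℝ) - 1)).add (Real.hasDerivAt_cos x)) hd
    have harc :=
      (Real.hasDerivAt_arctan (Real.sin x / ((n : ℝ) - 1 + Real.cos x))).comp x hq
    have hF : HasDerivAt f _ x := (hasDerivAt_id x).sub (harc.const_mul (n : ℝ))
    convert hF using 1
    have hs : Real.sin x ^ 2 = 1 - Real.cos x ^ 2 := by
      nlinarith [Real.sin_sq_add_cos_sq x]
    have hD : (((n : ℝ) - 1) + Real.cos x) ^ 2 + Real.sin x ^ 2 ≠ 0 := by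
      nlinarith [Real.neg_one_le_cos x, Real.cos_le_one x, Real.sin_sq_add_cos_sq x]
    have heq : 1 / (1 + (Real.sin x / ((n : ℝ) - 1 + Real.cos x)) ^ 2) *
        ((Real.cos x * ((n : ℝ) - 1 + Real.cos x) - Real.sin x * (0 + -Real.sin x)) /
          ((n : ℝ) - 1 + Real.cos x) ^ 2)
        = (((n : ℝ) - 1) * Real.cos x + 1) /
          ((((n : ℝ) - 1) + Real.cos x) ^ 2 + Real.sin x ^ 2) := by
      field_simp
      linear_combination hs
    rw [← heq]
  -- positivity of derivative when cos x < 1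
  have hpos : ∀ x : ℝ, Real.cos x < 1 →
      0 < 1 - n * ((((n : ℝ) - 1) * Real.cos x + 1) /
        ((((n : ℝ) - 1) + Real.cos x) ^ 2 + Real.sin x ^ 2)) := by
    intro x hx
    have hs := Real.sin_sq_add_cos_sq x
    have hD : (0 : ℝ) < (((n : ℝ) - 1) + Real.cos x) ^ 2 + Real.sin x ^ 2 := by
      nlinarith [Real.neg_one_le_cos x, Real.cos_le_one x]
    rw [sub_pos, mul_div_assoc' , div_lt_one hD]
    nlinarith [hs, mul_pos (by linarith : (0:ℝ) < (n:ℝ) - 2) (by linarith : (0:ℝ) < 1 - Real.cos x)]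
  have hcoslt : ∀ x : ℝ, 0 < x → x ≤ π → Real.cos x < 1 := by
    intro x h1 h2
    have := Real.strictAntiOn_cos ⟨le_refl 0, Real.pi_pos.le⟩ ⟨h1.le, h2⟩ h1
    simpa using this
  have key : ∀ a b : ℝ, (∀ x ∈ Set.Ioo a b, Real.cos x < 1) →
      StrictMonoOn f (Set.Icc a b) := by
    intro a b hlt
    apply strictMonoOn_of_deriv_pos (convex_Icc a b) hcont.continuousOn
    intro x hx
    rw [interior_Icc] at hx
    rw [(hderiv x).deriv]
    exact hpos x (hlt x hx)
  have h1 : StrictMonoOn f (Set.Icc (-π) 0) := by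
    apply key
    intro x hx
    have : Real.cos x = Real.cos (-x) := (Real.cos_neg x).symm
    rw [this]
    exact hcoslt (-x) (by linarith [hx.2]) (by linarith [hx.1])
  have h2 : StrictMonoOn f (Set.Icc 0 π) := by
    apply key
    intro x hx
    exact hcoslt x hx.1 hx.2.le
  have hmono : StrictMonoOn f (Set.Icc (-π) π) := by
    intro x hx y hy hxy
    rcases le_or_gt y 0 with hy0 | hy0
    · exact h1 ⟨hx.1, by linarith⟩ ⟨hy.1, hy0⟩ hxy
    rcases le_or_gt 0 x with hx0 | hx0
    · exact h2 ⟨hx0, hx.2⟩ ⟨hy0.le, hy.2⟩ hxy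
    · calc f x < f 0 := h1 ⟨hx.1, hx0.le⟩ ⟨by linarith [Real.pi_pos], le_refl 0⟩ hx0
        _ < f y := h2 ⟨le_refl 0, Real.pi_pos.le⟩ ⟨hy0.le, hy.2⟩ hy0
  have hfpi : f π = π := by simp [hf]
  have hfnpi : f (-π) = -π := by simp [hf]
  have hf0 : f 0 = 0 := by simp [hf]
  have hle : (-π : ℝ) ≤ π := by linarith [Real.pi_pos]
  have himg : f '' Set.Icc (-π) π = Set.Icc (-π) π := by
    apply Set.Subset.antisymm
    · rintro _ ⟨x, hx, rfl⟩
      constructor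
      · rw [← hfnpi]
        exact hmono.monotoneOn ⟨le_refl _, hle⟩ hx hx.1
      · rw [← hfpi]
        exact hmono.monotoneOn hx ⟨hle, le_refl _⟩ hx.2
    · have := intermediate_value_Icc hle hcont.continuousOn
      rwa [hfnpi, hfpi] at this
  refine ⟨hcont.continuousOn, hmono, himg, ?_, ?_, ?_⟩
  · exact hfnpi
  · exact hf0
  · exact hfpi
end

section
/- Let n ≥ 3 and define θ(α) = α − n · arctan(sin α / (n − 1 + cos α)). Then for every real α ∈ (−π, π), θ is differentiable at α with θ'(α) = 2(n−1)(n−2) sin²(α/2) / ((n−2)² + 4(n−1) cos²(α/2)); in particular θ'(α) ≥ 0, with equality only at α = 0. -/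
open Real

set_option maxHeartbeats 1600000 in
/-- For `n ≥ 3` and `α ∈ (−π, π)`, the function
`θ(α) = α − n · arctan(sin α / (n − 1 + cos α))` is differentiable at `α` with
derivative `2(n−1)(n−2) sin²(α/2) / ((n−2)² + 4(n−1) cos²(α/2))`, which is
nonnegative and vanishes exactly at `α = 0`. -/
theorem theta_hasDerivAt (n : ℕ) (hn : 3 ≤ n) (α : ℝ) (hα : α ∈ Set.Ioo (-π) π) :
    HasDerivAt
      (fun a : ℝ => a - n * Real.arctan (Real.sin a / ((n : ℝ) - 1 + Real.cos a)))
      (2 * ((n : ℝ) - 1) * ((n : ℝ) - 2) * Real.sin (α / 2) ^ 2 /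
        (((n : ℝ) - 2) ^ 2 + 4 * ((n : ℝ) - 1) * Real.cos (α / 2) ^ 2)) α ∧
    0 ≤ 2 * ((n : ℝ) - 1) * ((n : ℝ) - 2) * Real.sin (α / 2) ^ 2 /
        (((n : ℝ) - 2) ^ 2 + 4 * ((n : ℝ) - 1) * Real.cos (α / 2) ^ 2) ∧
    (2 * ((n : ℝ) - 1) * ((n : ℝ) - 2) * Real.sin (α / 2) ^ 2 /
        (((n : ℝ) - 2) ^ 2 + 4 * ((n : ℝ) - 1) * Real.cos (α / 2) ^ 2) = 0 ↔ α = 0) := by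
  obtain ⟨hα1, hα2⟩ := hα
  have hn3 : (3:ℝ) ≤ (n:ℝ) := by exact_mod_cast hn
  have hpos : 0 < (n:ℝ) - 1 + Real.cos α := by
    have := Real.neg_one_le_cos α; linarith
  have hden : 0 < ((n:ℝ)-2)^2 + 4*((n:ℝ)-1)*Real.cos (α/2)^2 := by
    nlinarith [sq_nonneg (Real.cos (α/2)), sq_nonneg ((n:ℝ)-2)]
  have hcos2 : Real.cos (α/2)^2 = (1 + Real.cos α)/2 := by
    have h := Real.cos_sq (α/2)
    rw [show 2*(α/2) = α by ring] at h
    linarith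
  have hsin : Real.sin (α/2)^2 = (1 - Real.cos α)/2 := by
    have h := Real.sin_sq_add_cos_sq (α/2)
    linarith
  have hsq : Real.sin α ^ 2 = 1 - Real.cos α ^ 2 := Real.sin_sq α
  -- derivative of the inner quotient
  have hd : HasDerivAt (fun a => Real.sin a / ((n:ℝ) - 1 + Real.cos a))
      ((Real.cos α * ((n:ℝ) - 1 + Real.cos α) - Real.sin α * (0 + -Real.sin α))
        / ((n:ℝ) - 1 + Real.cos α)^2) α :=
    (Real.hasDerivAt_sin α).div
      ((hasDerivAt_const α ((n:ℝ) - 1)).add (Real.hasDerivAt_cos α)) hpos.ne'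
  have hat := hd.arctan
  have hfull := (hasDerivAt_id α).sub (hat.const_mul (n:ℝ))
  have e1 : Real.cos α * ((n:ℝ) - 1 + Real.cos α) - Real.sin α * (0 + -Real.sin α)
      = Real.cos α * ((n:ℝ) - 1 + Real.cos α) + (1 - Real.cos α ^ 2) := by
    rw [← hsq]; ring
  have e2 : 1 + (Real.sin α / ((n:ℝ) - 1 + Real.cos α))^2
      = (((n:ℝ) - 1 + Real.cos α)^2 + 1 - Real.cos α ^ 2) / ((n:ℝ) - 1 + Real.cos α)^2 := by
    field_simp
    linarith [hsq]
  rw [e1, e2] at hfull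
  have hq : 0 < ((n:ℝ) - 1 + Real.cos α)^2 + 1 - Real.cos α ^ 2 := by
    have := Real.neg_one_le_cos α
    have := Real.cos_le_one α
    nlinarith
  constructor
  · convert hfull using 1
    case e'_4 => rfl
    case e'_5 => rfl
    case e'_8 => rfl
    have e3 : (1:ℝ)/((((n:ℝ) - 1 + Real.cos α)^2 + 1 - Real.cos α ^ 2) / ((n:ℝ) - 1 + Real.cos α)^2)
        * ((Real.cos α * ((n:ℝ) - 1 + Real.cos α) + (1 - Real.cos α ^ 2)) / ((n:ℝ) - 1 + Real.cos α)^2)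
        = (Real.cos α * ((n:ℝ) - 1 + Real.cos α) + (1 - Real.cos α ^ 2))
          / (((n:ℝ) - 1 + Real.cos α)^2 + 1 - Real.cos α ^ 2) := by
      field_simp
    have hQD : ((n:ℝ)-2)^2 + 4*((n:ℝ)-1)*Real.cos (α/2)^2
        = ((n:ℝ) - 1 + Real.cos α)^2 + 1 - Real.cos α ^ 2 := by
      rw [hcos2]; ring
    rw [e3, hQD, hsin]
    field_simp [hq.ne']
    ring
  have h1 : (0:ℝ) ≤ (n:ℝ) - 1 := by linarith
  have h2 : (0:ℝ) ≤ (n:ℝ) - 2 := by linarith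
  have hco : (0:ℝ) < 2 * ((n:ℝ)-1) * ((n:ℝ)-2) := by nlinarith
  constructor
  · exact div_nonneg (mul_nonneg hco.le (sq_nonneg _)) hden.le
  · rw [div_eq_zero_iff]
    constructor
    · rintro (h | h)
      · rcases mul_eq_zero.mp h with h' | h'
        · exact absurd h' hco.ne'
        · have hs : Real.sin (α/2) = 0 := by
            have := sq_nonneg (Real.sin (α/2)); nlinarith
          have hpi : 0 < π := Real.pi_pos
          rw [Real.sin_eq_zero_iff_of_lt_of_lt (by linarith) (by linarith)] at hs
          linarith
      · exact absurd h hden.ne'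
    · intro h
      left; simp [h]
end

section
/- Let n ≥ 2 and define γ(α) = e^{iα} (1 − (1 − e^{−iα})/n)^n. Then for every α ∈ [−π, π] one has |γ(α)| ≥ (1 − 2/n)^n, with equality if and only if α = π or α = −π. -/
open Complex Real

/-- For `n ≥ 2` and `α ∈ [−π, π]`, one has `|γ(α)| ≥ (1 − 2/n)ⁿ`, with equality iff
`α = π` or `α = −π`, where `γ(α) = e^{iα}(1 − (1 − e^{−iα})/n)ⁿ`. -/
theorem abs_gamma_ge (n : ℕ) (hn : 2 ≤ n) (α : ℝ) (hα : α ∈ Set.Icc (-π) π) :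
    (1 - 2 / (n : ℝ)) ^ n ≤ ‖Complex.exp (Complex.I * α) *
        (1 - (1 - Complex.exp (-(Complex.I * α))) / n) ^ n‖ ∧
    (‖Complex.exp (Complex.I * α) *
        (1 - (1 - Complex.exp (-(Complex.I * α))) / n) ^ n‖ = (1 - 2 / (n : ℝ)) ^ n ↔
      α = π ∨ α = -π) := by
  obtain ⟨hα1, hα2⟩ := hα
  have hn0 : (0:ℝ) < n := by positivity
  have hn2 : (2:ℝ) ≤ n := by exact_mod_cast hn
  have hb : (0:ℝ) ≤ 1 - 2 / n := by
    rw [sub_nonneg, div_le_one hn0]; exact hn2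
  set A := ‖(1 - (1 - Complex.exp (-(Complex.I * α))) / n)‖ with hA
  have hz : (1 - (1 - Complex.exp (-(Complex.I * α))) / (n:ℂ)) =
      ((((n:ℝ) - 1 + Real.cos α)/n : ℝ) : ℂ) + (((-(Real.sin α))/n : ℝ) : ℂ) * I := by
    have h1 : -(Complex.I * (α:ℂ)) = ((-α : ℝ) : ℂ) * I := by push_cast; ring
    rw [h1, Complex.exp_mul_I, ← Complex.ofReal_cos, ← Complex.ofReal_sin,
      Real.cos_neg, Real.sin_neg]
    have hn0' : (n:ℂ) ≠ 0 := by exact_mod_cast hn0.ne'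
    push_cast
    field_simp
    ring
  have hsqA : A ^ 2 = (1 - 2/(n:ℝ))^2 + 2*((n:ℝ)-1)*(1 + Real.cos α)/(n:ℝ)^2 := by
    rw [hA, hz, Complex.sq_norm, Complex.normSq_add_mul_I]
    have hs : Real.sin α ^ 2 = 1 - Real.cos α ^ 2 := Real.sin_sq α
    field_simp
    nlinarith [hs]
  have hcos : -1 ≤ Real.cos α := Real.neg_one_le_cos α
  have hAnonneg : 0 ≤ A := norm_nonneg _
  have hkey : 0 ≤ 2*((n:ℝ)-1)*(1 + Real.cos α)/(n:ℝ)^2 := by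
    apply div_nonneg _ (by positivity)
    nlinarith
  have hAge : 1 - 2/(n:ℝ) ≤ A := by
    nlinarith [hsqA, hkey, hAnonneg, hb]
  have habs : ‖Complex.exp (Complex.I * α) *
      (1 - (1 - Complex.exp (-(Complex.I * α))) / n) ^ n‖ = A ^ n := by
    rw [norm_mul, norm_pow, Complex.norm_exp]
    norm_num [Complex.mul_re]
    rfl
  have hcosiff : Real.cos α = -1 ↔ α = π ∨ α = -π := by
    constructor
    · intro h
      have h1 : Real.cos |α| = Real.cos π := by rw [Real.cos_abs, h, Real.cos_pi]
      have h2 : |α| = π := Real.injOn_cos ⟨abs_nonneg α, abs_le.2 ⟨hα1, hα2⟩⟩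
        ⟨le_of_lt Real.pi_pos, le_refl π⟩ h1
      rcases abs_eq (le_of_lt Real.pi_pos) |>.1 h2 with h | h
      · exact Or.inl h
      · exact Or.inr h
    · rintro (rfl | rfl) <;> simp [Real.cos_pi]
  constructor
  · rw [habs]
    exact pow_le_pow_left₀ hb hAge n
  · rw [habs, ← hcosiff]
    constructor
    · intro h
      have hAeq : A = 1 - 2/(n:ℝ) :=
        (pow_left_strictMonoOn₀ (n := n) (by omega)).injOn hAnonneg hb h
      rw [hAeq] at hsqA
      have h0 : 2*((n:ℝ)-1)*(1 + Real.cos α) = 0 := by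
        have h1 : 2*((n:ℝ)-1)*(1 + Real.cos α)/(n:ℝ)^2 = 0 := by linarith
        field_simp at h1
        linarith
      nlinarith
    · intro h
      have : A ^ 2 = (1 - 2/(n:ℝ))^2 := by rw [hsqA, h]; ring
      have hAeq : A = 1 - 2/(n:ℝ) := by nlinarith
      rw [hAeq]
end

section
/- Let n ≥ 3, define Γ(α, y) = e^{iyα} (1 − (1 − e^{−iα}) y/n)^n and γ(α) = Γ(α, 1) = e^{iα} (1 − (1 − e^{−iα})/n)^n. Then for every integer m with 2 ≤ m ≤ n − 2 and every α ∈ [−π, π] with α ≠ 0, the point Γ(α, m) does not belong to the image γ([−π, π]): there is no α* ∈ [−π, π] with Γ(α, m) = γ(α*). -/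
open Complex Real

noncomputable def bc (σ θ : ℝ) : ℂ :=
  Complex.exp (-(Complex.I * σ * θ)) * ((Real.cos θ : ℂ) + Complex.I * σ * (Real.sin θ : ℂ))

lemma bc_base (n k : ℕ) (hn : (n:ℂ) ≠ 0) (α : ℝ) :
    ((Real.cos (α/2) : ℂ) + Complex.I * ((((n:ℝ) - 2*k)/n : ℝ) : ℂ) * (Real.sin (α/2) : ℂ))
      = Complex.exp (Complex.I * (α/2 : ℝ)) * (1 - (1 - Complex.exp (-(Complex.I * α))) * k / n) := by
  have h1 : Complex.exp (-(Complex.I * α)) = (Complex.exp (Complex.I * (α/2 : ℝ)))⁻¹ ^ 2 := by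
    rw [← Complex.exp_neg, ← Complex.exp_nat_mul]
    congr 1
    push_cast
    ring
  rw [Complex.ofReal_cos, Complex.ofReal_sin, Complex.cos, Complex.sin, h1]
  have h2 : Complex.exp (-(α/2 : ℝ) * Complex.I) = (Complex.exp (Complex.I * (α/2 : ℝ)))⁻¹ := by
    rw [← Complex.exp_neg]; ring_nf
  have h3 : Complex.exp ((α/2 : ℝ) * Complex.I) = Complex.exp (Complex.I * (α/2 : ℝ)) := by
    ring_nf
  rw [h2, h3]
  have hE : Complex.exp (Complex.I * (α/2 : ℝ)) ≠ 0 := Complex.exp_ne_zero _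
  have hI : Complex.I ^ 2 = -1 := Complex.I_sq
  push_cast
  field_simp
  ring_nf
  rw [hI]
  ring

lemma lemA (n k : ℕ) (hn : (n:ℂ) ≠ 0) (α : ℝ) :
    Complex.exp (Complex.I * k * α) * (1 - (1 - Complex.exp (-(Complex.I * α))) * k / n) ^ n
      = bc (((n:ℝ) - 2*k)/n) (α/2) ^ n := by
  unfold bc
  rw [mul_pow, bc_base n k hn α, mul_pow, ← Complex.exp_nat_mul, ← Complex.exp_nat_mul,
    ← mul_assoc, ← Complex.exp_add]
  congr 1
  have : ((n:ℂ)) * -(Complex.I * ((((n:ℝ) - 2*k)/n : ℝ) : ℂ) * ((α/2 : ℝ) : ℂ))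
      = -(Complex.I * ((n:ℂ) - 2*k) * ((α/2:ℝ) : ℂ)) := by
    push_cast
    field_simp
  rw [this]
  push_cast
  ring_nf

lemma bc_neg_fst (σ θ : ℝ) : bc (-σ) θ = starRingEnd ℂ (bc σ θ) := by
  unfold bc
  rw [map_mul, ← Complex.exp_conj]
  congr 1
  · congr 1
    simp [Complex.ext_iff]
  · simp [Complex.ext_iff]

lemma bc_neg_snd (σ θ : ℝ) : bc σ (-θ) = starRingEnd ℂ (bc σ θ) := by
  unfold bc
  rw [map_mul, ← Complex.exp_conj]
  simp [Complex.ext_iff]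

lemma bc_absSq (σ θ : ℝ) :
    ‖bc σ θ‖ ^ 2 = Real.cos θ ^ 2 + σ^2 * Real.sin θ ^ 2 := by
  unfold bc
  rw [norm_mul, mul_pow, Complex.norm_exp]
  simp only [Complex.sq_norm]
  have : (-(Complex.I * σ * θ)).re = 0 := by simp
  rw [this, Real.exp_zero, one_pow, one_mul]
  simp [Complex.normSq_apply, Complex.cos_ofReal_re, Complex.sin_ofReal_re]
  ring

lemma bc_polar (σ θ₀ V r : ℝ) (hσ0 : 0 ≤ σ) (hσ1 : σ < 1) (hθ0 : 0 ≤ θ₀) (hθ1 : θ₀ ≤ π/2)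
    (hVeq : (1 - σ^2) * Real.sin θ₀ ^ 2 = V) (hr : r = Real.sqrt (1 - V)) (hrpos : 0 < r) :
    bc σ θ₀ = (r : ℂ) * Complex.exp
        ((((Real.arcsin (σ * Real.sqrt (V/(1-σ^2)) / r) - σ * θ₀) : ℝ) : ℂ) * Complex.I)
      ∧ Real.arcsin (Real.sqrt (V/(1-σ^2))) = θ₀
      ∧ Real.sqrt (V/(1-σ^2)) = Real.sin θ₀ := by
  have hπ := Real.pi_pos
  have hsin0 : 0 ≤ Real.sin θ₀ := Real.sin_nonneg_of_nonneg_of_le_pi hθ0 (by linarith)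
  have hcos0 : 0 ≤ Real.cos θ₀ := Real.cos_nonneg_of_mem_Icc ⟨by linarith, hθ1⟩
  have hA : (0:ℝ) < 1 - σ^2 := by nlinarith
  have hp : Real.sqrt (V/(1-σ^2)) = Real.sin θ₀ := by
    rw [← hVeq, mul_comm, mul_div_assoc, div_self (ne_of_gt hA), mul_one, Real.sqrt_sq hsin0]
  have harc : Real.arcsin (Real.sqrt (V/(1-σ^2))) = θ₀ := by
    rw [hp]; exact Real.arcsin_sin (by linarith) hθ1
  have hr2 : r^2 = Real.cos θ₀^2 + σ^2 * Real.sin θ₀^2 := by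
    rw [hr, Real.sq_sqrt (by nlinarith [Real.sin_sq_add_cos_sq θ₀])]
    nlinarith [Real.sin_sq_add_cos_sq θ₀]
  set q₀ : ℝ := σ * Real.sqrt (V/(1-σ^2)) / r with hq₀
  have hq₀' : q₀ = σ * Real.sin θ₀ / r := by rw [hq₀, hp]
  have hq00 : 0 ≤ q₀ := by
    rw [hq₀']; positivity
  have hq01 : q₀ ≤ 1 := by
    rw [hq₀', div_le_one hrpos]
    nlinarith
  have hsinψ : Real.sin (Real.arcsin q₀) = q₀ := Real.sin_arcsin (by linarith) hq01
  have hcosψ : r * Real.cos (Real.arcsin q₀) = Real.cos θ₀ := by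
    rw [Real.cos_arcsin]
    rw [show r * Real.sqrt (1 - q₀^2) = Real.sqrt (r^2 * (1 - q₀^2)) by
      rw [Real.sqrt_mul (by positivity), Real.sqrt_sq hrpos.le]]
    rw [show r^2 * (1 - q₀^2) = Real.cos θ₀^2 by
      rw [hq₀']; field_simp; nlinarith]
    exact Real.sqrt_sq hcos0
  refine ⟨?_, harc, hp⟩
  have key : ((Real.cos θ₀ : ℂ) + Complex.I * σ * Real.sin θ₀)
      = (r:ℂ) * Complex.exp ((Real.arcsin q₀ : ℝ) * Complex.I) := by
    rw [Complex.exp_mul_I, ← Complex.ofReal_cos, ← Complex.ofReal_sin, hsinψ,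
      show Real.cos (Real.arcsin q₀) = Real.cos θ₀ / r by
        field_simp at hcosψ ⊢; linarith [hcosψ],
      hq₀']
    have hrC : (r:ℂ) ≠ 0 := by exact_mod_cast hrpos.ne'
    push_cast
    field_simp
  unfold bc
  rw [key]
  rw [show ((((Real.arcsin q₀ - σ * θ₀) : ℝ)) : ℂ) * Complex.I
      = ((Real.arcsin q₀ : ℝ) : ℂ) * Complex.I + -(Complex.I * σ * θ₀) by push_cast; ring]
  rw [Complex.exp_add]
  ring

noncomputable def Gf (V r σ : ℝ) : ℝ :=
  Real.arcsin (σ * Real.sqrt (V/(1-σ^2)) / r) - σ * Real.arcsin (Real.sqrt (V/(1-σ^2)))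

lemma Gf_deriv (V r s1 σ : ℝ) (hV : 0 < V) (hs1 : 0 < s1) (hs11 : s1 < 1)
    (hVle : V ≤ 1 - s1^2) (hr : r = Real.sqrt (1-V)) (hσ : σ ∈ Set.Ioo 0 s1) :
    HasDerivAt (Gf V r)
      (Real.sqrt V / Real.sqrt (1 - σ^2 - V)
        - Real.arcsin (Real.sqrt V / Real.sqrt (1 - σ^2))) σ := by
  obtain ⟨hσ0, hσs1⟩ := hσ
  have hA : (0:ℝ) < 1 - σ^2 := by nlinarith
  have hC : (0:ℝ) < 1 - σ^2 - V := by nlinarith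
  have h1V : (0:ℝ) < 1 - V := by nlinarith
  set w := Real.sqrt V with hw
  set a := Real.sqrt (1 - σ^2) with ha
  set c := Real.sqrt (1 - σ^2 - V) with hc
  have hw0 : 0 < w := Real.sqrt_pos.mpr hV
  have ha0 : 0 < a := Real.sqrt_pos.mpr hA
  have hc0 : 0 < c := Real.sqrt_pos.mpr hC
  have hw2 : w^2 = V := Real.sq_sqrt hV.le
  have ha2 : a^2 = 1 - σ^2 := Real.sq_sqrt hA.le
  have hc2 : c^2 = 1 - σ^2 - V := Real.sq_sqrt hC.le
  have hr0 : 0 < r := by rw [hr]; exact Real.sqrt_pos.mpr h1V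
  have hr2 : r^2 = 1 - V := by rw [hr]; exact Real.sq_sqrt h1V.le
  have hwa : w < a := by nlinarith
  have hpe : Real.sqrt (V/(1-σ^2)) = w/a := Real.sqrt_div' V hA.le
  have hsq1 : Real.sqrt (1 - (w/a)^2) = c/a := by
    rw [show (1:ℝ) - (w/a)^2 = (c/a)^2 by field_simp; linarith]
    exact Real.sqrt_sq (by positivity)
  have hsq2 : Real.sqrt (1 - (σ*(w/a)/r)^2) = c/(a*r) := by
    rw [show (1:ℝ) - (σ*(w/a)/r)^2 = (c/(a*r))^2 by
      field_simp
      linear_combination r^2*ha2 + (1-σ^2)*hr2 - hc2 - σ^2*hw2]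
    exact Real.sqrt_sq (by positivity)
  have h1 : HasDerivAt (fun x : ℝ => 1 - x^2) (-(2*σ)) σ := by
    simpa using ((hasDerivAt_pow 2 σ).const_sub 1)
  have h2 : HasDerivAt (fun x : ℝ => V / (1 - x^2)) (2*σ*V/(1-σ^2)^2) σ := by
    have := (h1.inv hA.ne').const_mul V
    simp only [div_eq_mul_inv]
    refine this.congr_deriv ?_
    ring
  have h3 : HasDerivAt (fun x : ℝ => Real.sqrt (V/(1-x^2))) (σ*w/a^3) σ := by
    have := h2.sqrt (by positivity)
    convert this using 1
    rw [hpe, ← hw2, ← ha2]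
    field_simp
  have h4 : HasDerivAt (fun x : ℝ => Real.arcsin (Real.sqrt (V/(1-x^2)))) (σ*w/(a^2*c)) σ := by
    have hx1 : Real.sqrt (V/(1-σ^2)) ≠ -1 := by
      rw [hpe]
      have : (0:ℝ) < w/a := by positivity
      linarith
    have hx2 : Real.sqrt (V/(1-σ^2)) ≠ 1 := by
      rw [hpe]; exact ne_of_lt (by rw [div_lt_one ha0]; exact hwa)
    have := (Real.hasDerivAt_arcsin hx1 hx2).comp σ h3
    refine this.congr_deriv ?_
    rw [hpe, hsq1]
    field_simp
  have h5 : HasDerivAt (fun x : ℝ => x * Real.sqrt (V/(1-x^2)) / r) (w/(a^3*r)) σ := by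
    have := ((hasDerivAt_id σ).mul h3).div_const r
    refine this.congr_deriv ?_
    rw [hpe]
    field_simp
    simp only [id_eq]
    linear_combination ha2
  have h6 : HasDerivAt (fun x : ℝ => Real.arcsin (x * Real.sqrt (V/(1-x^2)) / r)) (w/(a^2*c)) σ := by
    have hqv : σ * Real.sqrt (V/(1-σ^2)) / r = σ*(w/a)/r := by rw [hpe]
    have hq1 : σ * Real.sqrt (V/(1-σ^2)) / r ≠ -1 := by
      rw [hqv]
      have : (0:ℝ) < σ*(w/a)/r := by positivity
      linarith
    have hq2 : σ * Real.sqrt (V/(1-σ^2)) / r ≠ 1 := by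
      rw [hqv]
      intro h
      have h' : σ * w = a * r := by
        field_simp at h
        linarith [h]
      have h2' : (σ*w)^2 = (a*r)^2 := by rw [h']
      have h3' : σ^2*V = (1-σ^2)*(1-V) := by
        linear_combination h2' - σ^2*hw2 + r^2*ha2 + (1-σ^2)*hr2
      nlinarith [h3', hC]
    have := (Real.hasDerivAt_arcsin hq1 hq2).comp σ h5
    refine this.congr_deriv ?_
    rw [hqv, hsq2]
    field_simp
  have h7 : HasDerivAt (fun x : ℝ => x * Real.arcsin (Real.sqrt (V/(1-x^2))))
      (Real.arcsin (w/a) + σ^2*w/(a^2*c)) σ := by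
    have := (hasDerivAt_id σ).mul h4
    refine this.congr_deriv ?_
    rw [hpe]
    simp only [id_eq]
    ring
  have hG := h6.sub h7
  have heq : w/(a^2*c) - (Real.arcsin (w/a) + σ^2*w/(a^2*c)) = w/c - Real.arcsin (w/a) := by
    have hkey : w/(a^2*c) - σ^2*w/(a^2*c) = w/c := by
      field_simp
      linear_combination (-1:ℝ)*ha2
    linarith
  rw [heq] at hG
  exact hG

lemma Gf_mono (V r s1 : ℝ) (hV : 0 < V) (hs1 : 0 < s1) (hs11 : s1 < 1)
    (hVle : V ≤ 1 - s1^2) (hr : r = Real.sqrt (1-V)) :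
    StrictMonoOn (Gf V r) (Set.Icc 0 s1) := by
  have h1V : (0:ℝ) < 1 - V := by nlinarith
  have hr0 : 0 < r := by rw [hr]; exact Real.sqrt_pos.mpr h1V
  have hne : ∀ x ∈ Set.Icc (0:ℝ) s1, 1 - x^2 ≠ 0 := by
    intro x hx
    have := hx.1; have := hx.2
    nlinarith
  have hcont : ContinuousOn (fun x : ℝ => Real.sqrt (V/(1-x^2))) (Set.Icc 0 s1) := by
    apply ContinuousOn.sqrt
    exact continuousOn_const.div (by fun_prop) hne
  apply strictMonoOn_of_deriv_pos (convex_Icc 0 s1)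
  · apply ContinuousOn.sub
    · apply Real.continuous_arcsin.comp_continuousOn
      exact (continuousOn_id.mul hcont).div_const r
    · exact continuousOn_id.mul (Real.continuous_arcsin.comp_continuousOn hcont)
  · intro x hx
    rw [interior_Icc] at hx
    rw [(Gf_deriv V r s1 x hV hs1 hs11 hVle hr hx).deriv]
    obtain ⟨hx0, hxs1⟩ := hx
    have hA : (0:ℝ) < 1 - x^2 := by nlinarith
    have hC : (0:ℝ) < 1 - x^2 - V := by nlinarith
    set w := Real.sqrt V with hw
    set a := Real.sqrt (1 - x^2) with ha
    set c := Real.sqrt (1 - x^2 - V) with hc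
    have hw0 : 0 < w := Real.sqrt_pos.mpr hV
    have ha0 : 0 < a := Real.sqrt_pos.mpr hA
    have hc0 : 0 < c := Real.sqrt_pos.mpr hC
    have hw2 : w^2 = V := Real.sq_sqrt hV.le
    have ha2 : a^2 = 1 - x^2 := Real.sq_sqrt hA.le
    have hc2 : c^2 = 1 - x^2 - V := Real.sq_sqrt hC.le
    have hwa : w/a < 1 := by rw [div_lt_one ha0]; nlinarith
    have hwa0 : 0 < w/a := by positivity
    have ht0 : 0 < Real.arcsin (w/a) := Real.arcsin_pos.mpr hwa0
    have htlt : Real.arcsin (w/a) < π/2 := Real.arcsin_lt_pi_div_two.mpr hwa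
    have htan := Real.lt_tan ht0 htlt
    have hteq : Real.tan (Real.arcsin (w/a)) = w/c := by
      rw [Real.tan_eq_sin_div_cos, Real.sin_arcsin (by linarith) hwa.le, Real.cos_arcsin]
      rw [show (1:ℝ) - (w/a)^2 = (c/a)^2 by field_simp; linarith]
      rw [Real.sqrt_sq (by positivity)]
      field_simp
    rw [hteq] at htan
    linarith

lemma bc_abs_or (σ θ₀ : ℝ) :
    bc σ θ₀ = bc |σ| |θ₀| ∨ bc σ θ₀ = starRingEnd ℂ (bc |σ| |θ₀|) := by
  rcases abs_choice σ with h1|h1 <;> rcases abs_choice θ₀ with h2|h2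
  · left; rw [h1, h2]
  · right; rw [h1, h2]; simp [bc_neg_snd]
  · right; rw [h1, h2]; simp [bc_neg_fst]
  · left; rw [h1, h2, bc_neg_fst, bc_neg_snd, Complex.conj_conj]

lemma re_pow_conj (z : ℂ) (n : ℕ) : (((starRingEnd ℂ) z)^n).re = (z^n).re := by
  rw [← map_pow]; exact Complex.conj_re _

lemma abs_pow_conj (z : ℂ) (n : ℕ) : ‖((starRingEnd ℂ) z)^n‖ = ‖z^n‖ := by
  rw [← map_pow, Complex.norm_conj]

lemma re_rexp (R x : ℝ) (n : ℕ) :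
    (((R:ℂ) * Complex.exp ((x:ℝ) * Complex.I))^n).re = R^n * Real.cos (n*x) := by
  rw [mul_pow, ← Complex.exp_nat_mul,
    show (n:ℂ) * ((x:ℝ) * Complex.I) = ((n*x : ℝ):ℂ) * Complex.I by push_cast; ring,
    show ((R:ℂ))^n = ((R^n : ℝ):ℂ) by push_cast; ring,
    Complex.re_ofReal_mul, Complex.exp_ofReal_mul_I_re]

/-- For `n ≥ 3`, `2 ≤ m ≤ n − 2` and `α ∈ [−π, π]` with `α ≠ 0`, the point
`Γ(α, m) = e^{imα}(1 − (1 − e^{−iα}) m/n)ⁿ` does not lie on the image of the curve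
`γ(α*) = e^{iα*}(1 − (1 − e^{−iα*})/n)ⁿ`, `α* ∈ [−π, π]`. -/
theorem Gamma_not_on_gamma (n m : ℕ) (hn : 3 ≤ n) (hm : 2 ≤ m) (hmn : m ≤ n - 2)
    (α : ℝ) (hα : α ∈ Set.Icc (-π) π) (hα0 : α ≠ 0) :
    ¬ ∃ αstar ∈ Set.Icc (-π) π,
      Complex.exp (Complex.I * m * α) *
          (1 - (1 - Complex.exp (-(Complex.I * α))) * m / n) ^ n =
        Complex.exp (Complex.I * αstar) *
          (1 - (1 - Complex.exp (-(Complex.I * αstar))) / n) ^ n := by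
  rintro ⟨αs, hαs, heq⟩
  have hπ := Real.pi_pos
  have hn4 : 4 ≤ n := by omega
  have hnR : (0:ℝ) < n := by positivity
  have hnC : (n:ℂ) ≠ 0 := by exact_mod_cast hnR.ne'
  -- rewrite both sides via lemA
  have hL := lemA n m hnC α
  have hR := lemA n 1 hnC αs
  simp only [Nat.cast_one, mul_one] at hR
  rw [hL, hR] at heq
  -- normalize signs
  set σm : ℝ := ((n:ℝ) - 2*m)/n with hσm
  set s : ℝ := |σm| with hs
  set s1 : ℝ := ((n:ℝ) - 2)/n with hs1
  set θ : ℝ := |α/2| with hθ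
  set θs : ℝ := |αs/2| with hθs
  -- basic bounds
  have hs0 : 0 ≤ s := abs_nonneg _
  have hmR : (m:ℝ) ≤ (n:ℝ) - 2 := by
    have : (m:ℝ) ≤ ((n-2 : ℕ) : ℝ) := by exact_mod_cast hmn
    rw [Nat.cast_sub (by omega)] at this
    simpa using this
  have hmR2 : (2:ℝ) ≤ m := by exact_mod_cast hm
  have hnR4 : (4:ℝ) ≤ n := by exact_mod_cast hn4
  have hss1 : s < s1 := by
    rw [hs, hs1, hσm, abs_div, abs_of_pos hnR, div_lt_div_iff_of_pos_right hnR]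
    rw [abs_lt]
    constructor <;> linarith
  have hs1pos : 0 < s1 := by rw [hs1]; exact div_pos (by linarith) hnR
  have hs11 : s1 < 1 := by rw [hs1, div_lt_one hnR]; linarith
  have hs1' : s < 1 := lt_trans hss1 hs11
  have hθ0 : 0 < θ := by
    rw [hθ]
    exact abs_pos.mpr (div_ne_zero hα0 two_ne_zero)
  have hθπ : θ ≤ π/2 := by
    rw [hθ, abs_div, abs_of_pos (by norm_num : (0:ℝ) < 2), div_le_div_iff_of_pos_right]
    · exact abs_le.mpr ⟨hα.1, hα.2⟩
    · norm_num
  have hθs0 : 0 ≤ θs := abs_nonneg _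
  have hθsπ : θs ≤ π/2 := by
    rw [hθs, abs_div, abs_of_pos (by norm_num : (0:ℝ) < 2), div_le_div_iff_of_pos_right]
    · exact abs_le.mpr ⟨hαs.1, hαs.2⟩
    · norm_num
  -- modulus and real part invariants
  have hbm := bc_abs_or σm (α/2)
  have hbs := bc_abs_or s1 (αs/2)
  rw [abs_of_pos hs1pos] at hbs
  have hre : ((bc s θ)^n).re = ((bc s1 θs)^n).re := by
    rcases hbm with h|h <;> rcases hbs with h'|h' <;> rw [h, h'] at heq <;>
      have h2 := congrArg Complex.re heq <;>
      simp -failIfUnchanged only [re_pow_conj, ← map_pow, Complex.conj_re] at h2 <;>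
      rw [← hs, ← hθ, ← hθs] at h2 <;> exact h2
  have habs : ‖bc s θ‖ = ‖bc s1 θs‖ := by
    have habs' : ‖(bc s θ)^n‖ = ‖(bc s1 θs)^n‖ := by
      rcases hbm with h|h <;> rcases hbs with h'|h' <;> rw [h, h'] at heq <;>
        have h2 := congrArg (‖·‖) heq <;>
        simp -failIfUnchanged only [abs_pow_conj, ← map_pow, Complex.norm_conj] at h2 <;>
        rw [← hs, ← hθ, ← hθs] at h2 <;> exact h2
    rw [norm_pow, norm_pow] at habs'
    exact (pow_left_strictMonoOn₀ (show n ≠ 0 by omega)).injOn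
      (norm_nonneg _) (norm_nonneg _) habs'
  -- the common modulus parameters
  set V : ℝ := (1 - s^2) * Real.sin θ ^ 2 with hVdef
  set r : ℝ := Real.sqrt (1 - V) with hrdef
  have hsinθ : 0 < Real.sin θ := Real.sin_pos_of_pos_of_lt_pi hθ0 (by linarith)
  have hV0 : 0 < V := by
    rw [hVdef]
    have h1 : (0:ℝ) < 1 - s^2 := by nlinarith
    exact mul_pos h1 (pow_pos hsinθ 2)
  have habs2 : Real.cos θs ^2 + s1^2 * Real.sin θs ^2 = 1 - V := by
    have h2 := congrArg (·^2) habs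
    rw [bc_absSq, bc_absSq] at h2
    have hpy1 := Real.sin_sq_add_cos_sq θ
    linear_combination -h2 + hVdef + hpy1
  have hVs : (1 - s1^2) * Real.sin θs ^2 = V := by
    have hpy2 := Real.sin_sq_add_cos_sq θs
    linear_combination -habs2 + hpy2
  have hsq10 : (0:ℝ) ≤ 1 - s1^2 := by
    have h2 := mul_pos (show (0:ℝ) < 1 - s1 by linarith) (show (0:ℝ) < 1 + s1 by linarith)
    nlinarith [h2]
  have hVle : V ≤ 1 - s1^2 := by
    have h1 : Real.sin θs ^2 ≤ 1 := Real.sin_sq_le_one θs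
    calc V = (1 - s1^2) * Real.sin θs ^2 := hVs.symm
      _ ≤ (1 - s1^2) * 1 := mul_le_mul_of_nonneg_left h1 hsq10
      _ = 1 - s1^2 := mul_one _
  have hr0 : 0 < r := by
    rw [hrdef]
    apply Real.sqrt_pos.mpr
    linarith [pow_pos hs1pos 2]
  obtain ⟨hb1, harc1, hp1'⟩ := bc_polar s θ V r hs0 hs1' hθ0.le hθπ hVdef.symm hrdef hr0
  obtain ⟨hb2, harc2, hp2'⟩ := bc_polar s1 θs V r hs1pos.le hs11 hθs0 hθsπ hVs hrdef hr0
  have hGs : Real.arcsin (s * Real.sqrt (V/(1-s^2)) / r) - s*θ = Gf V r s := by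
    unfold Gf; rw [harc1]
  have hGs1 : Real.arcsin (s1 * Real.sqrt (V/(1-s1^2)) / r) - s1*θs = Gf V r s1 := by
    unfold Gf; rw [harc2]
  rw [hb1, hb2, re_rexp, re_rexp, hGs, hGs1] at hre
  have hcos : Real.cos (n * Gf V r s) = Real.cos (n * Gf V r s1) :=
    mul_left_cancel₀ (pow_pos hr0 n).ne' hre
  -- monotonicity of the argument function
  have hM := Gf_mono V r s1 hV0 hs1pos hs11 hVle hrdef
  have hG0 : Gf V r 0 = 0 := by simp [Gf]
  have hmem0 : (0:ℝ) ∈ Set.Icc 0 s1 := ⟨le_refl 0, hs1pos.le⟩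
  have hmems : s ∈ Set.Icc 0 s1 := ⟨hs0, hss1.le⟩
  have hmem1 : s1 ∈ Set.Icc 0 s1 := ⟨hs1pos.le, le_refl _⟩
  have hGs0 : 0 ≤ Gf V r s := by
    rcases eq_or_lt_of_le hs0 with h|h
    · rw [← h, hG0]
    · rw [← hG0]; exact (hM hmem0 hmems h).le
  have hGlt : Gf V r s < Gf V r s1 := hM hmems hmem1 hss1
  -- the boundary argument is at most π
  have hsins : 0 ≤ Real.sin θs := Real.sin_nonneg_of_nonneg_of_le_pi hθs0 (by linarith)
  have hs1r : s1 ≤ r := by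
    have h2 : s1^2 ≤ 1 - V := by linarith
    calc s1 = Real.sqrt (s1^2) := (Real.sqrt_sq hs1pos.le).symm
      _ ≤ Real.sqrt (1-V) := Real.sqrt_le_sqrt h2
      _ = r := hrdef.symm
  have harcle : Real.arcsin (s1 * Real.sqrt (V/(1-s1^2)) / r) ≤ θs := by
    rw [hp2']
    calc Real.arcsin (s1 * Real.sin θs / r) ≤ Real.arcsin (Real.sin θs) := by
          apply Real.monotone_arcsin
          rw [div_le_iff₀ hr0]
          calc s1 * Real.sin θs ≤ r * Real.sin θs := mul_le_mul_of_nonneg_right hs1r hsins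
            _ = Real.sin θs * r := mul_comm _ _
      _ = θs := Real.arcsin_sin (by linarith) hθsπ
  have hGub : Gf V r s1 ≤ (1 - s1) * θs := by
    rw [← hGs1, show (1 - s1) * θs = θs - s1 * θs by ring]
    linarith [harcle]
  have hnGs1 : (n:ℝ) * Gf V r s1 ≤ π := by
    have he : (n:ℝ) * (1 - s1) = 2 := by
      rw [hs1]
      field_simp
      ring
    calc (n:ℝ) * Gf V r s1 ≤ (n:ℝ) * ((1-s1)*θs) :=
          mul_le_mul_of_nonneg_left hGub (by positivity)
      _ = 2 * θs := by rw [← mul_assoc, he]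
      _ ≤ π := by linarith
  have hlt2 : (n:ℝ) * Gf V r s < (n:ℝ) * Gf V r s1 := mul_lt_mul_of_pos_left hGlt hnR
  have hfinal := Real.strictAntiOn_cos
    ⟨mul_nonneg hnR.le hGs0, le_trans hlt2.le hnGs1⟩
    ⟨mul_nonneg hnR.le (le_trans hGs0 hGlt.le), hnGs1⟩ hlt2
  rw [hcos] at hfinal
  exact lt_irrefl _ hfinal
end
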